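/- arXiv:1909.04746 — 3 statements merged into one kernel-verified Lean document; each statement's English description precedes it below -/
import Mathlib

section
/- Under the Local SGD dynamics with identical data in the finite-sum/expectation setting (f = E_{z∼D_m}[f(·,z)], f(·,z) almost surely L-smooth and μ-strongly convex with μ ≥ 0, g_t^m = ∇f(x_t^m, z_t^m) with all z_t^m independent), with stepsize 0 < γ ≤ 1/(2L) and synchronization times satisfying t_{p+1} - t_p ≤ H, let α = 1 - γμ, let t_p be a synchronization time and v = t_{p+1} - 1. Then Σ_{t=t_p}^{v} α^{v-t} E[V_t] ≤ (2γ(H-1)/α) Σ_{t=t_p}^{v} α^{v-t} E[D_f(x̂_t, x_*)] + 2γ²σ_opt²(H-1) Σ_{t=t_p}^{v} α^{v-t}, where V_t = (1/M) Σ_m ‖x_t^m - x̂_t‖², x̂_t = (1/M) Σ_m x_t^m, D_f(x,y) = f(x) - f(y) - ⟨∇f(y), x-y⟩, and σ_opt² = (1/M) Σ_m E_{z_m∼D_m}‖∇f(x_*, z_m)‖². -/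
open MeasureTheory ProbabilityTheory Finset
open scoped InnerProductSpace

/-- `f : ℝ^d → ℝ` is `L`-smooth and `μ`-strongly convex (`μ = 0` meaning merely convex),
witnessed by the gradient map `df`:
`(μ/2)‖x - y‖² ≤ f x - f y - ⟪df y, x - y⟫ ≤ (L/2)‖x - y‖²` for all `x, y`. -/
def SmoothSC {d : ℕ} (L μ : ℝ) (f : EuclideanSpace ℝ (Fin d) → ℝ)
    (df : EuclideanSpace ℝ (Fin d) → EuclideanSpace ℝ (Fin d)) : Prop :=
  ∀ x y : EuclideanSpace ℝ (Fin d),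
    μ / 2 * ‖x - y‖ ^ 2 ≤ f x - f y - ⟪df y, x - y⟫_ℝ ∧
    f x - f y - ⟪df y, x - y⟫_ℝ ≤ L / 2 * ‖x - y‖ ^ 2

/-- The Bregman divergence `D_f(x, y) = f x - f y - ⟪∇f y, x - y⟫` of `f`,
with gradient map `df`. -/
noncomputable def Breg {d : ℕ} (f : EuclideanSpace ℝ (Fin d) → ℝ)
    (df : EuclideanSpace ℝ (Fin d) → EuclideanSpace ℝ (Fin d))
    (x y : EuclideanSpace ℝ (Fin d)) : ℝ :=
  f x - f y - ⟪df y, x - y⟫_ℝ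

section Det
variable {d : ℕ} {L μ : ℝ} {g : EuclideanSpace ℝ (Fin d) → ℝ}
  {dg : EuclideanSpace ℝ (Fin d) → EuclideanSpace ℝ (Fin d)}

lemma SmoothSC.cocoercive (hL : 0 < L) (hμ : 0 ≤ μ) (h : SmoothSC L μ g dg)
    (x y : EuclideanSpace ℝ (Fin d)) :
    ‖dg x - dg y‖ ^ 2 ≤ 2 * L * (g x - g y - ⟪dg y, x - y⟫_ℝ) := by
  set w := dg x - dg y with hw
  set u := x - L⁻¹ • w with hu
  have h1 : (0:ℝ) ≤ g u - g y - ⟪dg y, u - y⟫_ℝ := by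
    have := (h u y).1
    nlinarith [sq_nonneg ‖u - y‖]
  have h2 : g u - g x - ⟪dg x, u - x⟫_ℝ ≤ L / 2 * ‖u - x‖ ^ 2 := (h u x).2
  have hux : u - x = -(L⁻¹ • w) := by rw [hu]; abel
  have huy : u - y = (x - y) - L⁻¹ • w := by rw [hu]; abel
  have e1 : ⟪dg x, u - x⟫_ℝ = -(L⁻¹ * ⟪dg x, w⟫_ℝ) := by
    rw [hux, inner_neg_right, real_inner_smul_right]
  have e2 : ⟪dg y, u - y⟫_ℝ = ⟪dg y, x - y⟫_ℝ - L⁻¹ * ⟪dg y, w⟫_ℝ := by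
    rw [huy, inner_sub_right, real_inner_smul_right]
  have e3 : ‖u - x‖ ^ 2 = L⁻¹ ^ 2 * ‖w‖ ^ 2 := by
    rw [hux, norm_neg, norm_smul, mul_pow]
    congr 1
    rw [Real.norm_eq_abs, sq_abs]
  have e4 : ⟪dg x, w⟫_ℝ - ⟪dg y, w⟫_ℝ = ‖w‖ ^ 2 := by
    rw [← inner_sub_left, ← hw, real_inner_self_eq_norm_sq]
  have hLne : L ≠ 0 := ne_of_gt hL
  have key : g y + ⟪dg y, u - y⟫_ℝ ≤ g x + ⟪dg x, u - x⟫_ℝ + L / 2 * ‖u - x‖ ^ 2 := by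
    linarith
  rw [e1, e2, e3] at key
  have : L⁻¹ * ‖w‖ ^ 2 - L / 2 * (L⁻¹ ^ 2 * ‖w‖ ^ 2) = ‖w‖ ^ 2 / (2 * L) := by
    field_simp; ring
  have e4' : L⁻¹ * ⟪dg x, w⟫_ℝ - L⁻¹ * ⟪dg y, w⟫_ℝ = L⁻¹ * ‖w‖ ^ 2 := by
    rw [← mul_sub, e4]
  have h5 : ‖w‖ ^ 2 / (2 * L) ≤ g x - g y - ⟪dg y, x - y⟫_ℝ := by linarith
  have := (div_le_iff₀ (by positivity : (0:ℝ) < 2 * L)).1 h5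
  linarith

lemma SmoothSC.lipschitz_sq (hL : 0 < L) (hμ : 0 ≤ μ) (h : SmoothSC L μ g dg)
    (x y : EuclideanSpace ℝ (Fin d)) :
    ‖dg x - dg y‖ ^ 2 ≤ L ^ 2 * ‖x - y‖ ^ 2 := by
  calc ‖dg x - dg y‖ ^ 2 ≤ 2 * L * (g x - g y - ⟪dg y, x - y⟫_ℝ) := h.cocoercive hL hμ x y
    _ ≤ 2 * L * (L / 2 * ‖x - y‖ ^ 2) := by
        have := (h x y).2
        nlinarith
    _ = L ^ 2 * ‖x - y‖ ^ 2 := by ring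

end Det

section SumLemma

/-- Pure arithmetic epoch-summation lemma. -/
lemma epoch_sum_bound (α γ K : ℝ) (hα : 0 < α) (hγ : 0 < γ) (hK : 0 ≤ K)
    (a b : ℕ → ℝ) (t0 v : ℕ) (Hm : ℕ) (ht0v : t0 ≤ v) (hvH : v - t0 ≤ Hm)
    (ha0 : a t0 = 0) (hb : ∀ t, t0 ≤ t → t ≤ v → 0 ≤ b t)
    (hrec : ∀ t, t0 ≤ t → t + 1 ≤ v → a (t + 1) ≤ α * a t + (2 * γ * b t + K)) :
    ∑ t ∈ Finset.Icc t0 v, α ^ (v - t) * a t ≤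
      2 * γ * (Hm : ℝ) / α * ∑ t ∈ Finset.Icc t0 v, α ^ (v - t) * b t +
        K * (Hm : ℝ) * ∑ t ∈ Finset.Icc t0 v, α ^ (v - t) := by
  set c : ℕ → ℝ := fun t => 2 * γ * b t + K with hc
  have hcpos : ∀ t, t0 ≤ t → t ≤ v → 0 ≤ c t := fun t h1 h2 => by
    have := hb t h1 h2; simp only [hc]; positivity
  -- joint induction: unrolled bound and weighted-sum bound
  have key : ∀ u, t0 ≤ u → u ≤ v →
      (a u ≤ ∑ τ ∈ Finset.Ico t0 u, α ^ (u - 1 - τ) * c τ) ∧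
      (∑ t ∈ Finset.Icc t0 u, α ^ (u - t) * a t ≤
        ∑ τ ∈ Finset.Ico t0 u, ((u : ℝ) - τ) * α ^ (u - 1 - τ) * c τ) := by
    intro u hu
    induction u, hu using Nat.le_induction with
    | base =>
      intro _
      constructor
      · simp [ha0]
      · simp [ha0]
    | succ u hu ih =>
      intro huv
      have huv' : u ≤ v := le_of_lt huv
      obtain ⟨ihU, ihW⟩ := ih huv'
      have hrecu : a (u + 1) ≤ α * a u + c u := hrec u hu huv
      have hU : a (u + 1) ≤ ∑ τ ∈ Finset.Ico t0 (u + 1), α ^ (u + 1 - 1 - τ) * c τ := by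
        have h1 : α * a u ≤ α * ∑ τ ∈ Finset.Ico t0 u, α ^ (u - 1 - τ) * c τ :=
          mul_le_mul_of_nonneg_left ihU hα.le
        have h2 : α * ∑ τ ∈ Finset.Ico t0 u, α ^ (u - 1 - τ) * c τ
            = ∑ τ ∈ Finset.Ico t0 u, α ^ (u - τ) * c τ := by
          rw [Finset.mul_sum]
          refine Finset.sum_congr rfl fun τ hτ => ?_
          obtain ⟨h3, h4⟩ := Finset.mem_Ico.1 hτ
          have : u - τ = (u - 1 - τ) + 1 := by omega
          rw [this, pow_succ]; ring
        simp only [Nat.add_sub_cancel]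
        rw [Finset.sum_Ico_succ_top (hu : t0 ≤ u), Nat.sub_self, pow_zero, one_mul]
        calc a (u + 1) ≤ α * a u + c u := hrecu
          _ ≤ ∑ τ ∈ Finset.Ico t0 u, α ^ (u - τ) * c τ + c u := by
              rw [← h2]; linarith
      refine ⟨hU, ?_⟩
      -- weighted sum step
      have hsplit : ∑ t ∈ Finset.Icc t0 (u + 1), α ^ (u + 1 - t) * a t
          = α * (∑ t ∈ Finset.Icc t0 u, α ^ (u - t) * a t) + a (u + 1) := by
        rw [Finset.sum_Icc_succ_top (by omega : t0 ≤ u + 1), Finset.mul_sum]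
        have : u + 1 - (u + 1) = 0 := by omega
        rw [this, pow_zero, one_mul]
        congr 1
        refine Finset.sum_congr rfl fun t ht => ?_
        obtain ⟨h3, h4⟩ := Finset.mem_Icc.1 ht
        have : u + 1 - t = (u - t) + 1 := by omega
        rw [this, pow_succ]; ring
      rw [hsplit]
      have hW1 : α * (∑ t ∈ Finset.Icc t0 u, α ^ (u - t) * a t)
          ≤ ∑ τ ∈ Finset.Ico t0 u, ((u : ℝ) - τ) * α ^ (u - τ) * c τ := by
        calc α * (∑ t ∈ Finset.Icc t0 u, α ^ (u - t) * a t)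
            ≤ α * ∑ τ ∈ Finset.Ico t0 u, ((u : ℝ) - τ) * α ^ (u - 1 - τ) * c τ :=
              mul_le_mul_of_nonneg_left ihW hα.le
          _ = ∑ τ ∈ Finset.Ico t0 u, ((u : ℝ) - τ) * α ^ (u - τ) * c τ := by
              rw [Finset.mul_sum]
              refine Finset.sum_congr rfl fun τ hτ => ?_
              obtain ⟨h3, h4⟩ := Finset.mem_Ico.1 hτ
              have : u - τ = (u - 1 - τ) + 1 := by omega
              rw [this, pow_succ]; ring
      calc α * (∑ t ∈ Finset.Icc t0 u, α ^ (u - t) * a t) + a (u + 1)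
          ≤ (∑ τ ∈ Finset.Ico t0 u, ((u : ℝ) - τ) * α ^ (u - τ) * c τ)
            + ∑ τ ∈ Finset.Ico t0 (u + 1), α ^ (u + 1 - 1 - τ) * c τ := by
            exact add_le_add hW1 hU
        _ = ∑ τ ∈ Finset.Ico t0 (u + 1), (((u+1 : ℕ) : ℝ) - τ) * α ^ (u + 1 - 1 - τ) * c τ := by
            simp only [Nat.add_sub_cancel]
            rw [Finset.sum_Ico_succ_top (hu : t0 ≤ u), Finset.sum_Ico_succ_top (hu : t0 ≤ u),
              Nat.sub_self, pow_zero, ← add_assoc, ← Finset.sum_add_distrib]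
            congr 1
            · refine Finset.sum_congr rfl fun τ hτ => ?_
              push_cast
              ring
            · push_cast
              ring
  obtain ⟨-, hW⟩ := key v ht0v le_rfl
  -- now bound the RHS of hW
  have step1 : ∑ τ ∈ Finset.Ico t0 v, ((v : ℝ) - τ) * α ^ (v - 1 - τ) * c τ
      ≤ (Hm : ℝ) * ∑ τ ∈ Finset.Ico t0 v, α ^ (v - 1 - τ) * c τ := by
    rw [Finset.mul_sum]
    refine Finset.sum_le_sum fun τ hτ => ?_
    obtain ⟨h3, h4⟩ := Finset.mem_Ico.1 hτ
    have hvτ : ((v : ℝ) - τ) ≤ (Hm : ℝ) := by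
      have : v - τ ≤ Hm := by omega
      have h5 : ((v - τ : ℕ) : ℝ) ≤ (Hm : ℝ) := by exact_mod_cast this
      rw [Nat.cast_sub (le_of_lt h4)] at h5
      linarith
    have hcτ : 0 ≤ c τ := hcpos τ h3 (le_of_lt h4)
    have hpow : (0:ℝ) ≤ α ^ (v - 1 - τ) := pow_nonneg hα.le _
    have h6 : (0:ℝ) ≤ (v : ℝ) - τ := by
      have := le_of_lt h4
      have : (τ : ℝ) ≤ v := by exact_mod_cast this
      linarith
    calc ((v : ℝ) - τ) * α ^ (v - 1 - τ) * c τ ≤ (Hm : ℝ) * α ^ (v - 1 - τ) * c τ := by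
          apply mul_le_mul_of_nonneg_right _ hcτ
          exact mul_le_mul_of_nonneg_right hvτ hpow
      _ = (Hm : ℝ) * (α ^ (v - 1 - τ) * c τ) := by ring
  have step2 : ∑ τ ∈ Finset.Ico t0 v, α ^ (v - 1 - τ) * c τ
      = 2 * γ / α * ∑ τ ∈ Finset.Ico t0 v, α ^ (v - τ) * b τ
        + K * ∑ τ ∈ Finset.Ico t0 v, α ^ (v - 1 - τ) := by
    rw [Finset.mul_sum, Finset.mul_sum, ← Finset.sum_add_distrib]
    refine Finset.sum_congr rfl fun τ hτ => ?_
    obtain ⟨h3, h4⟩ := Finset.mem_Ico.1 hτ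
    have hvτ : v - τ = (v - 1 - τ) + 1 := by omega
    rw [hc, hvτ, pow_succ]
    field_simp
  have step3 : ∑ τ ∈ Finset.Ico t0 v, α ^ (v - τ) * b τ
      ≤ ∑ τ ∈ Finset.Icc t0 v, α ^ (v - τ) * b τ := by
    rw [← Finset.Ico_insert_right ht0v, Finset.sum_insert Finset.right_notMem_Ico]
    have : (0:ℝ) ≤ α ^ (v - v) * b v := by
      have := hb v ht0v le_rfl
      positivity
    linarith
  have step4 : ∑ τ ∈ Finset.Ico t0 v, α ^ (v - 1 - τ) ≤ ∑ t ∈ Finset.Icc t0 v, α ^ (v - t) := by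
    have e : ∑ τ ∈ Finset.Ico t0 v, α ^ (v - 1 - τ)
        = ∑ t ∈ Finset.Icc (t0 + 1) v, α ^ (v - t) := by
      refine Finset.sum_nbij' (fun τ => τ + 1) (fun t => t - 1) ?_ ?_ ?_ ?_ ?_
      · intro τ hτ; obtain ⟨h3, h4⟩ := Finset.mem_Ico.1 hτ
        exact Finset.mem_Icc.2 (by omega)
      · intro t ht; obtain ⟨h3, h4⟩ := Finset.mem_Icc.1 ht
        exact Finset.mem_Ico.2 (by omega)
      · intro τ hτ; rfl
      · intro t ht; obtain ⟨h3, h4⟩ := Finset.mem_Icc.1 ht; omega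
      · intro τ hτ; obtain ⟨h3, h4⟩ := Finset.mem_Ico.1 hτ
        congr 1; omega
    rw [e]
    apply Finset.sum_le_sum_of_subset_of_nonneg
    · intro t ht; obtain ⟨h3, h4⟩ := Finset.mem_Icc.1 ht
      exact Finset.mem_Icc.2 (by omega)
    · intro t _ _; positivity
  have hsum_b_nonneg : 0 ≤ ∑ τ ∈ Finset.Icc t0 v, α ^ (v - τ) * b τ := by
    apply Finset.sum_nonneg
    intro τ hτ; obtain ⟨h3, h4⟩ := Finset.mem_Icc.1 hτ
    have := hb τ h3 h4
    positivity
  have hγα : 0 ≤ 2 * γ / α := by positivity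
  have hHm : (0:ℝ) ≤ (Hm : ℝ) := Nat.cast_nonneg _
  calc ∑ t ∈ Finset.Icc t0 v, α ^ (v - t) * a t
      ≤ ∑ τ ∈ Finset.Ico t0 v, ((v : ℝ) - τ) * α ^ (v - 1 - τ) * c τ := hW
    _ ≤ (Hm : ℝ) * ∑ τ ∈ Finset.Ico t0 v, α ^ (v - 1 - τ) * c τ := step1
    _ = (Hm : ℝ) * (2 * γ / α * ∑ τ ∈ Finset.Ico t0 v, α ^ (v - τ) * b τ)
        + (Hm : ℝ) * (K * ∑ τ ∈ Finset.Ico t0 v, α ^ (v - 1 - τ)) := by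
        rw [step2]; ring
    _ ≤ (Hm : ℝ) * (2 * γ / α * ∑ τ ∈ Finset.Icc t0 v, α ^ (v - τ) * b τ)
        + (Hm : ℝ) * (K * ∑ t ∈ Finset.Icc t0 v, α ^ (v - t)) := by
        apply add_le_add
        · exact mul_le_mul_of_nonneg_left (mul_le_mul_of_nonneg_left step3 hγα) hHm
        · exact mul_le_mul_of_nonneg_left (mul_le_mul_of_nonneg_left step4 hK) hHm
    _ = 2 * γ * (Hm : ℝ) / α * ∑ t ∈ Finset.Icc t0 v, α ^ (v - t) * b t
        + K * (Hm : ℝ) * ∑ t ∈ Finset.Icc t0 v, α ^ (v - t) := by ring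

end SumLemma


section Vec
variable {d M : ℕ}
local notation "E" => EuclideanSpace ℝ (Fin d)

lemma sum_sub_avg (hM : 0 < M) (y : Fin M → E) :
    ∑ m : Fin M, (y m - (M : ℝ)⁻¹ • ∑ j, y j) = 0 := by
  rw [Finset.sum_sub_distrib, Finset.sum_const, Finset.card_univ, Fintype.card_fin]
  rw [← Nat.cast_smul_eq_nsmul ℝ, smul_smul]
  have : (M : ℝ) * (M : ℝ)⁻¹ = 1 := by
    field_simp
  rw [this, one_smul, sub_self]

/-- variance inequality: average squared deviation from the mean is at most
from any other point -/
lemma var_le (hM : 0 < M) (y : Fin M → E) (c : E) :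
    ∑ m : Fin M, ‖y m - (M : ℝ)⁻¹ • ∑ j, y j‖ ^ 2 ≤ ∑ m : Fin M, ‖y m - c‖ ^ 2 := by
  set yb := (M : ℝ)⁻¹ • ∑ j, y j with hyb
  have expand : ∀ m, ‖y m - c‖ ^ 2
      = ‖y m - yb‖ ^ 2 + 2 * ⟪y m - yb, yb - c⟫_ℝ + ‖yb - c‖ ^ 2 := by
    intro m
    have : y m - c = (y m - yb) + (yb - c) := by abel
    rw [this, norm_add_sq_real]
  have hsum : ∑ m : Fin M, ⟪y m - yb, yb - c⟫_ℝ = 0 := by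
    rw [← sum_inner]
    rw [sum_sub_avg hM y]
    exact inner_zero_left _
  have : ∑ m : Fin M, ‖y m - c‖ ^ 2
      = ∑ m : Fin M, ‖y m - yb‖ ^ 2 + 2 * (∑ m : Fin M, ⟪y m - yb, yb - c⟫_ℝ)
        + (M : ℝ) * ‖yb - c‖ ^ 2 := by
    calc ∑ m : Fin M, ‖y m - c‖ ^ 2
        = ∑ m : Fin M, (‖y m - yb‖ ^ 2 + 2 * ⟪y m - yb, yb - c⟫_ℝ + ‖yb - c‖ ^ 2) :=
          Finset.sum_congr rfl fun m _ => expand m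
      _ = ∑ m : Fin M, ‖y m - yb‖ ^ 2 + 2 * (∑ m : Fin M, ⟪y m - yb, yb - c⟫_ℝ)
          + (M : ℝ) * ‖yb - c‖ ^ 2 := by
          rw [Finset.sum_add_distrib, Finset.sum_add_distrib, Finset.sum_const,
            Finset.card_univ, Fintype.card_fin, nsmul_eq_mul, ← Finset.mul_sum]
  rw [this, hsum]
  have : (0:ℝ) ≤ (M : ℝ) * ‖yb - c‖ ^ 2 := by positivity
  linarith

lemma avg_norm_sq_le (hM : 0 < M) (v : Fin M → E) :
    ‖(M : ℝ)⁻¹ • ∑ j, v j‖ ^ 2 ≤ (M : ℝ)⁻¹ * ∑ j, ‖v j‖ ^ 2 := by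
  have h1 : ‖(M : ℝ)⁻¹ • ∑ j, v j‖ ^ 2 = (M : ℝ)⁻¹ ^ 2 * ‖∑ j, v j‖ ^ 2 := by
    rw [norm_smul, mul_pow, norm_inv, Real.norm_natCast]
  have h2 : ‖∑ j, v j‖ ^ 2 ≤ (M : ℝ) * ∑ j, ‖v j‖ ^ 2 := by
    have hn : ‖∑ j, v j‖ ≤ ∑ j, ‖v j‖ := norm_sum_le _ _
    have hsq := sq_sum_le_card_mul_sum_sq (s := (Finset.univ : Finset (Fin M)))
      (f := fun j => ‖v j‖)
    rw [Finset.card_univ, Fintype.card_fin] at hsq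
    calc ‖∑ j, v j‖ ^ 2 ≤ (∑ j, ‖v j‖) ^ 2 := by
          apply pow_le_pow_left₀ (norm_nonneg _) hn
      _ ≤ (M : ℝ) * ∑ j, ‖v j‖ ^ 2 := hsq
  have hM' : (0:ℝ) < M := by exact_mod_cast hM
  calc ‖(M : ℝ)⁻¹ • ∑ j, v j‖ ^ 2 = (M : ℝ)⁻¹ ^ 2 * ‖∑ j, v j‖ ^ 2 := h1
    _ ≤ (M : ℝ)⁻¹ ^ 2 * ((M : ℝ) * ∑ j, ‖v j‖ ^ 2) := by
        apply mul_le_mul_of_nonneg_left h2 (by positivity)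
    _ = (M : ℝ)⁻¹ * ∑ j, ‖v j‖ ^ 2 := by
        field_simp

end Vec


lemma rep_indep {d M : ℕ} {Z : Type*} [MeasurableSpace Z] {Ω : Type*} [MeasurableSpace Ω]
    (P : Measure Ω) [IsProbabilityMeasure P]
    (γ : ℝ) (dF : EuclideanSpace ℝ (Fin d) → Z → EuclideanSpace ℝ (Fin d))
    (hdFjm : Measurable (fun p : EuclideanSpace ℝ (Fin d) × Z => dF p.1 p.2))
    (z : ℕ → Fin M → Ω → Z) (hz : ∀ t m, Measurable (z t m))
    (hindep : iIndepFun (fun p : ℕ × Fin M => z p.1 p.2) P)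
    (x : ℕ → Fin M → Ω → EuclideanSpace ℝ (Fin d)) (x0 : EuclideanSpace ℝ (Fin d))
    (hx0 : ∀ m ω, x 0 m ω = x0)
    (s : ℕ → ℕ)
    (hsync : ∀ t m ω, (∃ p, s p = t + 1) →
      x (t + 1) m ω = (M : ℝ)⁻¹ • ∑ j, (x t j ω - γ • dF (x t j ω) (z t j ω)))
    (hlocal : ∀ t m ω, ¬(∃ p, s p = t + 1) →
      x (t + 1) m ω = x t m ω - γ • dF (x t m ω) (z t m ω)) :
    ∀ t mm, IndepFun (fun ω (j : Fin M) => x t j ω) (z t mm) P := by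
  classical
  set S : ℕ → Finset (ℕ × Fin M) := fun t => Finset.range t ×ˢ (Finset.univ : Finset (Fin M))
    with hS
  have rep : ∀ t, ∃ Φ : ((↥(S t)) → Z) → (Fin M → EuclideanSpace ℝ (Fin d)),
      Measurable Φ ∧ ∀ ω, (fun j => x t j ω) = Φ (fun i => z i.1.1 i.1.2 ω) := by
    intro t
    induction t with
    | zero =>
      refine ⟨fun _ _ => x0, measurable_const, fun ω => ?_⟩
      funext j
      exact hx0 j ω
    | succ t ih =>
      obtain ⟨Φ, hΦm, hΦ⟩ := ih
      have hsub : S t ⊆ S (t + 1) := by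
        apply Finset.product_subset_product_left
        intro i hi
        simp only [Finset.mem_range] at hi ⊢
        omega
      set ρ : ((↥(S (t+1))) → Z) → ((↥(S t)) → Z) := fun g i => g ⟨i.1, hsub i.2⟩ with hρ
      have hρm : Measurable ρ :=
        measurable_pi_lambda _ fun i => measurable_pi_apply _
      have hmemt : ∀ j : Fin M, ((t, j) : ℕ × Fin M) ∈ S (t + 1) := fun j => by
        simp [hS, Finset.mem_product]
      set ev : Fin M → ((↥(S (t+1))) → Z) → Z := fun j g => g ⟨(t, j), hmemt j⟩ with hev
      have hevm : ∀ j, Measurable (ev j) := fun j => measurable_pi_apply _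
      have hρz : ∀ ω, ρ (fun i : ↥(S (t+1)) => z i.1.1 i.1.2 ω)
          = fun i : ↥(S t) => z i.1.1 i.1.2 ω := fun ω => rfl
      by_cases hsy : ∃ q, s q = t + 1
      · refine ⟨fun g m => (M : ℝ)⁻¹ • ∑ j, (Φ (ρ g) j - γ • dF (Φ (ρ g) j) (ev j g)),
          ?_, ?_⟩
        · apply measurable_pi_lambda
          intro m
          apply Measurable.fun_const_smul
          apply Finset.measurable_sum
          intro j _
          have h1 : Measurable fun g : (↥(S (t+1))) → Z => Φ (ρ g) j :=
            (measurable_pi_apply j).comp (hΦm.comp hρm)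
          exact h1.sub ((hdFjm.comp (h1.prodMk (hevm j))).fun_const_smul γ)
        · intro ω
          funext m
          rw [hsync t m ω hsy]
          simp only [hρz ω, ← hΦ ω]
          rfl
      · refine ⟨fun g m => Φ (ρ g) m - γ • dF (Φ (ρ g) m) (ev m g), ?_, ?_⟩
        · apply measurable_pi_lambda
          intro m
          have h1 : Measurable fun g : (↥(S (t+1))) → Z => Φ (ρ g) m :=
            (measurable_pi_apply m).comp (hΦm.comp hρm)
          exact h1.sub ((hdFjm.comp (h1.prodMk (hevm m))).fun_const_smul γ)
        · intro ω
          funext m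
          rw [hlocal t m ω hsy]
          simp only [hρz ω, ← hΦ ω]
          rfl
  intro t mm
  obtain ⟨Φ, hΦm, hΦ⟩ := rep t
  have hdisj : Disjoint (S t) ({(t, mm)} : Finset (ℕ × Fin M)) := by
    rw [Finset.disjoint_singleton_right]
    simp [hS, Finset.mem_product]
  have key := hindep.indepFun_finset (S t) ({(t, mm)} : Finset (ℕ × Fin M)) hdisj
    (fun i => hz i.1 i.2)
  have key2 := key.comp hΦm
    (show Measurable fun g : (↥({(t, mm)} : Finset (ℕ × Fin M))) → Z =>
        g ⟨(t, mm), Finset.mem_singleton_self _⟩ from measurable_pi_apply _)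
  have heq1 : (Φ ∘ fun a (i : ↥(S t)) => z (i : ℕ × Fin M).1 (i : ℕ × Fin M).2 a)
      = fun ω (j : Fin M) => x t j ω := funext fun ω => (hΦ ω).symm
  have heq2 : ((fun g : (↥({(t, mm)} : Finset (ℕ × Fin M))) → Z =>
      g ⟨(t, mm), Finset.mem_singleton_self _⟩)
        ∘ fun a (i : ↥({(t, mm)} : Finset (ℕ × Fin M))) =>
          z (i : ℕ × Fin M).1 (i : ℕ × Fin M).2 a) = z t mm := rfl
  rw [heq1, heq2] at key2
  exact key2


section Toolkit
variable {Ω Z β : Type*} [MeasurableSpace Ω] [MeasurableSpace Z] [MeasurableSpace β]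

lemma map_pair_eq (P : Measure Ω) [IsProbabilityMeasure P]
    (X : Ω → β) (W : Ω → Z) (hX : Measurable X) (hW : Measurable W)
    (h : IndepFun X W P) (Dm : Measure Z) (hlaw : P.map W = Dm) :
    P.map (fun ω => (X ω, W ω)) = (P.map X).prod Dm := by
  rw [← hlaw]
  exact (ProbabilityTheory.indepFun_iff_map_prod_eq_prod_map_map hX.aemeasurable
    hW.aemeasurable).1 h

lemma ae_snd_prod {ν : Measure β} {κ : Measure Z} [SFinite ν] [SFinite κ]
    {p : Z → Prop} (h : ∀ᵐ w ∂κ, p w) : ∀ᵐ q ∂(ν.prod κ), p q.2 :=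
  (MeasureTheory.Measure.quasiMeasurePreserving_snd).ae h

lemma integrable_fst_prod {ν : Measure β} {κ : Measure Z} [IsFiniteMeasure ν]
    [IsProbabilityMeasure κ] {g : β → ℝ} (hg : Integrable g ν) :
    Integrable (fun q : β × Z => g q.1) (ν.prod κ) := by
  have hmap : (ν.prod κ).map Prod.fst = ν := by
    rw [MeasureTheory.Measure.map_fst_prod]; simp
  have := (integrable_map_measure (f := Prod.fst) (g := g)
    (by rw [hmap]; exact hg.aestronglyMeasurable) measurable_fst.aemeasurable)
  rw [hmap] at this
  exact this.1 hg

lemma integrable_snd_prod {ν : Measure β} {κ : Measure Z} [IsProbabilityMeasure ν]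
    [IsFiniteMeasure κ] {g : Z → ℝ} (hg : Integrable g κ) :
    Integrable (fun q : β × Z => g q.2) (ν.prod κ) := by
  have hmap : (ν.prod κ).map Prod.snd = κ := by
    rw [MeasureTheory.Measure.map_snd_prod]; simp
  have := (integrable_map_measure (f := Prod.snd) (g := g)
    (by rw [hmap]; exact hg.aestronglyMeasurable) measurable_snd.aemeasurable)
  rw [hmap] at this
  exact this.1 hg

end Toolkit

section Fsmooth
open scoped RealInnerProductSpace
variable {d : ℕ} {Z : Type*} [MeasurableSpace Z]

local notation "E" => EuclideanSpace ℝ (Fin d)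

lemma int_dF_of_sq (Dm : Measure Z) [IsProbabilityMeasure Dm]
    {dF : E → Z → E} (hdFjm : Measurable (fun p : E × Z => dF p.1 p.2)) (x : E)
    (hsq : Integrable (fun z => ‖dF x z‖ ^ 2) Dm) :
    Integrable (fun z => dF x z) Dm := by
  have hm : Measurable (fun z => dF x z) :=
    hdFjm.comp (measurable_const.prodMk measurable_id)
  refine Integrable.mono (g := fun z => 1 + ‖dF x z‖ ^ 2)
    ((integrable_const 1).add hsq) hm.aestronglyMeasurable ?_
  filter_upwards with z
  have h1 : (0:ℝ) ≤ ‖dF x z‖ := norm_nonneg _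
  have : ‖dF x z‖ ≤ 1 + ‖dF x z‖ ^ 2 := by nlinarith
  calc ‖dF x z‖ ≤ 1 + ‖dF x z‖ ^ 2 := this
    _ ≤ ‖1 + ‖dF x z‖ ^ 2‖ := le_abs_self _

lemma f_smoothSC {L μ : ℝ} {F : E → Z → ℝ} {dF : E → Z → E}
    {f : E → ℝ} {df : E → E} (Dm : Measure Z) [IsProbabilityMeasure Dm]
    (hsmooth : ∀ᵐ z ∂Dm, SmoothSC L μ (fun x => F x z) (fun x => dF x z))
    (hf : ∀ x, f x = ∫ z, F x z ∂Dm) (hdf : ∀ x, df x = ∫ z, dF x z ∂Dm)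
    (hdFjm : Measurable (fun p : E × Z => dF p.1 p.2))
    (hFint : ∀ x, Integrable (fun z => F x z) Dm)
    (hdFsq : ∀ x, Integrable (fun z => ‖dF x z‖ ^ 2) Dm) :
    SmoothSC L μ f df := by
  intro x y
  have hiInner : Integrable (fun z => ⟪dF y z, x - y⟫_ℝ) Dm := by
    have := (int_dF_of_sq Dm hdFjm y (hdFsq y)).inner_const (𝕜 := ℝ) (x - y)
    simpa using this
  have hInnerEq : ∫ z, ⟪dF y z, x - y⟫_ℝ ∂Dm = ⟪df y, x - y⟫_ℝ := by
    have h1 : (fun z => ⟪dF y z, x - y⟫_ℝ) = fun z => ⟪x - y, dF y z⟫_ℝ :=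
      funext fun z => real_inner_comm _ _
    rw [h1, integral_inner (int_dF_of_sq Dm hdFjm y (hdFsq y)) (x - y), ← hdf,
      real_inner_comm]
  have hI1 : Integrable (fun z => F x z - F y z - ⟪dF y z, x - y⟫_ℝ) Dm :=
    ((hFint x).sub (hFint y)).sub hiInner
  have hIntEq : ∫ z, (F x z - F y z - ⟪dF y z, x - y⟫_ℝ) ∂Dm
      = f x - f y - ⟪df y, x - y⟫_ℝ := by
    have hFxy : Integrable (fun z => F x z - F y z) Dm := (hFint x).sub (hFint y)
    rw [integral_sub hFxy hiInner, integral_sub (hFint x) (hFint y),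
      hInnerEq, ← hf, ← hf]
  constructor
  · have hmono : ∫ z, (μ / 2 * ‖x - y‖ ^ 2 : ℝ) ∂Dm
        ≤ ∫ z, (F x z - F y z - ⟪dF y z, x - y⟫_ℝ) ∂Dm := by
      refine integral_mono_ae (integrable_const _) hI1 ?_
      filter_upwards [hsmooth] with z hz
      exact (hz x y).1
    rw [integral_const] at hmono
    simp only [measure_univ, probReal_univ, one_smul, smul_eq_mul, one_mul] at hmono
    rw [← hIntEq]
    exact hmono
  · have hmono : ∫ z, (F x z - F y z - ⟪dF y z, x - y⟫_ℝ) ∂Dm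
        ≤ ∫ z, (L / 2 * ‖x - y‖ ^ 2 : ℝ) ∂Dm := by
      refine integral_mono_ae hI1 (integrable_const _) ?_
      filter_upwards [hsmooth] with z hz
      exact (hz x y).2
    rw [integral_const] at hmono
    simp only [measure_univ, probReal_univ, one_smul, smul_eq_mul, one_mul] at hmono
    rw [← hIntEq]
    exact hmono

lemma df_star_zero {L μ : ℝ} {f : E → ℝ} {df : E → E} (hL : 0 < L)
    (hfs : SmoothSC L μ f df) (xstar : E) (hmin : ∀ y, f xstar ≤ f y) :
    df xstar = 0 := by
  have key : ∀ u : E, (0:ℝ) ≤ ⟪df xstar, u⟫_ℝ + L / 2 * ‖u‖ ^ 2 := by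
    intro u
    have h1 := (hfs (xstar + u) xstar).2
    have h2 := hmin (xstar + u)
    have h3 : xstar + u - xstar = u := by abel
    rw [h3] at h1
    linarith
  have h4 := key ((-L⁻¹) • df xstar)
  rw [real_inner_smul_right, norm_smul] at h4
  have h5 : ‖(-L⁻¹ : ℝ)‖ = L⁻¹ := by
    rw [norm_neg, Real.norm_eq_abs, abs_of_pos (by positivity)]
  rw [h5] at h4
  have h6 : ⟪df xstar, df xstar⟫_ℝ = ‖df xstar‖ ^ 2 := real_inner_self_eq_norm_sq _
  rw [h6] at h4
  have hL' : L ≠ 0 := ne_of_gt hL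
  have h7 : -L⁻¹ * ‖df xstar‖ ^ 2 + L / 2 * (L⁻¹ * ‖df xstar‖) ^ 2
      = -(‖df xstar‖ ^ 2 / (2 * L)) := by field_simp; ring
  rw [h7] at h4
  have h8 : ‖df xstar‖ ^ 2 / (2 * L) ≤ 0 := by linarith
  have h9 : 0 ≤ ‖df xstar‖ ^ 2 / (2 * L) := by positivity
  have := le_antisymm h8 h9
  field_simp at this
  simpa using this

end Fsmooth

section MoreDet
variable {d M : ℕ}
local notation "E" => EuclideanSpace ℝ (Fin d)

lemma sq_norm_le_two (a b : E) : ‖a‖ ^ 2 ≤ 2 * ‖a - b‖ ^ 2 + 2 * ‖b‖ ^ 2 := by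
  have h1 : ‖a‖ ≤ ‖a - b‖ + ‖b‖ := by
    calc ‖a‖ = ‖(a - b) + b‖ := by rw [sub_add_cancel]
      _ ≤ ‖a - b‖ + ‖b‖ := norm_add_le _ _
  nlinarith [norm_nonneg (a - b), norm_nonneg b, norm_nonneg a, sq_nonneg (‖a - b‖ - ‖b‖)]

lemma sq_norm_sub_le (u v : E) : ‖u - v‖ ^ 2 ≤ 2 * ‖u‖ ^ 2 + 2 * ‖v‖ ^ 2 := by
  have h1 : ‖u - v‖ ≤ ‖u‖ + ‖v‖ := norm_sub_le _ _
  nlinarith [norm_nonneg u, norm_nonneg v, norm_nonneg (u - v), sq_nonneg (‖u‖ - ‖v‖)]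

lemma avg_sub_const (hM : 0 < M) (y : Fin M → E) (c : E) :
    (M : ℝ)⁻¹ • ∑ j, y j - c = (M : ℝ)⁻¹ • ∑ j, (y j - c) := by
  rw [Finset.sum_sub_distrib, smul_sub, Finset.sum_const, Finset.card_univ, Fintype.card_fin,
    ← Nat.cast_smul_eq_nsmul ℝ, smul_smul]
  have : (M : ℝ)⁻¹ * (M : ℝ) = 1 := by field_simp
  rw [this, one_smul]

lemma avg_of_sub_smul (hM : 0 < M) (y g : Fin M → E) (γ : ℝ) :
    (M : ℝ)⁻¹ • ∑ j, (y j - γ • g j)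
      = (M : ℝ)⁻¹ • ∑ j, y j - γ • ((M : ℝ)⁻¹ • ∑ j, g j) := by
  rw [Finset.sum_sub_distrib, smul_sub, ← Finset.smul_sum, smul_comm]

lemma step_pointwise (hM : 0 < M) (γ : ℝ) (y g : Fin M → E) :
    ∑ m, ‖(y m - γ • g m) - (M : ℝ)⁻¹ • ∑ j, (y j - γ • g j)‖ ^ 2
      ≤ ∑ m, ‖y m - (M : ℝ)⁻¹ • ∑ j, y j‖ ^ 2
        - 2 * γ * ∑ m, ⟪y m - (M : ℝ)⁻¹ • ∑ j, y j, g m⟫_ℝ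
        + γ ^ 2 * ∑ m, ‖g m‖ ^ 2 := by
  set yb := (M : ℝ)⁻¹ • ∑ j, y j with hyb
  set gb := (M : ℝ)⁻¹ • ∑ j, g j with hgb
  have hdecomp : ∀ m : Fin M, (y m - γ • g m) - (M : ℝ)⁻¹ • ∑ j, (y j - γ • g j)
      = (y m - yb) - γ • (g m - gb) := by
    intro m
    rw [avg_of_sub_smul hM y g γ, smul_sub]
    abel
  have hexp : ∀ m : Fin M, ‖(y m - yb) - γ • (g m - gb)‖ ^ 2
      = ‖y m - yb‖ ^ 2 - 2 * γ * ⟪y m - yb, g m - gb⟫_ℝ + γ ^ 2 * ‖g m - gb‖ ^ 2 := by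
    intro m
    rw [norm_sub_sq_real, real_inner_smul_right, norm_smul, mul_pow, Real.norm_eq_abs, sq_abs]
    ring
  have hcross : ∑ m : Fin M, ⟪y m - yb, g m - gb⟫_ℝ = ∑ m : Fin M, ⟪y m - yb, g m⟫_ℝ := by
    have : ∀ m : Fin M, ⟪y m - yb, g m - gb⟫_ℝ = ⟪y m - yb, g m⟫_ℝ - ⟪y m - yb, gb⟫_ℝ :=
      fun m => inner_sub_right _ _ _
    rw [Finset.sum_congr rfl fun m _ => this m, Finset.sum_sub_distrib]
    have h0 : ∑ m : Fin M, ⟪y m - yb, gb⟫_ℝ = 0 := by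
      rw [← sum_inner, sum_sub_avg hM y]
      exact inner_zero_left _
    rw [h0, sub_zero]
  have hvar : ∑ m : Fin M, ‖g m - gb‖ ^ 2 ≤ ∑ m : Fin M, ‖g m‖ ^ 2 := by
    have := var_le hM g 0
    simpa using this
  calc ∑ m, ‖(y m - γ • g m) - (M : ℝ)⁻¹ • ∑ j, (y j - γ • g j)‖ ^ 2
      = ∑ m : Fin M, (‖y m - yb‖ ^ 2 - 2 * γ * ⟪y m - yb, g m - gb⟫_ℝ
          + γ ^ 2 * ‖g m - gb‖ ^ 2) := by
        refine Finset.sum_congr rfl fun m _ => ?_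
        rw [hdecomp m, hexp m]
    _ = ∑ m : Fin M, ‖y m - yb‖ ^ 2 - 2 * γ * ∑ m : Fin M, ⟪y m - yb, g m - gb⟫_ℝ
        + γ ^ 2 * ∑ m : Fin M, ‖g m - gb‖ ^ 2 := by
        rw [Finset.sum_add_distrib, Finset.sum_sub_distrib, ← Finset.mul_sum, ← Finset.mul_sum]
    _ ≤ ∑ m : Fin M, ‖y m - yb‖ ^ 2 - 2 * γ * ∑ m : Fin M, ⟪y m - yb, g m⟫_ℝ
        + γ ^ 2 * ∑ m : Fin M, ‖g m‖ ^ 2 := by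
        rw [hcross]
        have hγ2 : (0:ℝ) ≤ γ ^ 2 := sq_nonneg _
        nlinarith [hvar]

lemma avg_f_le {L μ : ℝ} {f : E → ℝ} {df : E → E} (hM : 0 < M) (hμ : 0 ≤ μ)
    (hfs : SmoothSC L μ f df) (e : Fin M → E) :
    f ((M : ℝ)⁻¹ • ∑ j, e j) ≤ (M : ℝ)⁻¹ * ∑ m, f (e m) := by
  set yb := (M : ℝ)⁻¹ • ∑ j, e j with hyb
  have h1 : ∀ m : Fin M, f yb + ⟪df yb, e m - yb⟫_ℝ ≤ f (e m) := by
    intro m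
    have := (hfs (e m) yb).1
    nlinarith [sq_nonneg ‖e m - yb‖]
  have h2 : ∑ m : Fin M, (f yb + ⟪df yb, e m - yb⟫_ℝ) ≤ ∑ m : Fin M, f (e m) :=
    Finset.sum_le_sum fun m _ => h1 m
  have h3 : ∑ m : Fin M, ⟪df yb, e m - yb⟫_ℝ = 0 := by
    rw [← inner_sum, sum_sub_avg hM e]
    exact inner_zero_right _
  rw [Finset.sum_add_distrib, h3, Finset.sum_const, Finset.card_univ, Fintype.card_fin,
    nsmul_eq_mul, add_zero] at h2
  have hM' : (0:ℝ) < M := by exact_mod_cast hM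
  calc f yb = (M:ℝ)⁻¹ * ((M:ℝ) * f yb) := by field_simp
    _ ≤ (M:ℝ)⁻¹ * ∑ m, f (e m) := by
        apply mul_le_mul_of_nonneg_left h2 (by positivity)

lemma strong_conv_inner {L μ : ℝ} {f : E → ℝ} {df : E → E} (hμ : 0 ≤ μ)
    (hfs : SmoothSC L μ f df) (a yb : E) :
    f a - f yb + μ / 2 * ‖a - yb‖ ^ 2 ≤ ⟪a - yb, df a⟫_ℝ := by
  have h1 := (hfs yb a).1
  have h2 : ⟪df a, yb - a⟫_ℝ = -⟪a - yb, df a⟫_ℝ := by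
    rw [real_inner_comm, ← inner_neg_left]
    congr 1
    abel
  have h3 : ‖yb - a‖ = ‖a - yb‖ := norm_sub_rev _ _
  rw [h2, h3] at h1
  linarith

end MoreDet

section KeyTransfer
variable {d M : ℕ} {Z : Type*} [MeasurableSpace Z] {Ω : Type*} [MeasurableSpace Ω]
local notation "E" => EuclideanSpace ℝ (Fin d)

lemma breg_integral {F : E → Z → ℝ} {dF : E → Z → E} {f : E → ℝ} {df : E → E}
    (Dm : Measure Z) [IsProbabilityMeasure Dm]
    (hf : ∀ x, f x = ∫ z, F x z ∂Dm) (hdf : ∀ x, df x = ∫ z, dF x z ∂Dm)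
    (hdFjm : Measurable (fun p : E × Z => dF p.1 p.2))
    (hFint : ∀ x, Integrable (fun z => F x z) Dm)
    (hdFsq : ∀ x, Integrable (fun z => ‖dF x z‖ ^ 2) Dm) (x y : E) :
    Integrable (fun w => F x w - F y w - ⟪dF y w, x - y⟫_ℝ) Dm ∧
    ∫ w, (F x w - F y w - ⟪dF y w, x - y⟫_ℝ) ∂Dm = f x - f y - ⟪df y, x - y⟫_ℝ := by
  have hiInner : Integrable (fun z => ⟪dF y z, x - y⟫_ℝ) Dm := by
    have := (int_dF_of_sq Dm hdFjm y (hdFsq y)).inner_const (𝕜 := ℝ) (x - y)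
    simpa using this
  have hInnerEq : ∫ z, ⟪dF y z, x - y⟫_ℝ ∂Dm = ⟪df y, x - y⟫_ℝ := by
    have h1 : (fun z => ⟪dF y z, x - y⟫_ℝ) = fun z => ⟪x - y, dF y z⟫_ℝ :=
      funext fun z => real_inner_comm _ _
    rw [h1, integral_inner (int_dF_of_sq Dm hdFjm y (hdFsq y)) (x - y), ← hdf,
      real_inner_comm]
  have hFxy : Integrable (fun z => F x z - F y z) Dm := (hFint x).sub (hFint y)
  refine ⟨hFxy.sub hiInner, ?_⟩
  rw [integral_sub hFxy hiInner, integral_sub (hFint x) (hFint y),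
    hInnerEq, ← hf, ← hf]

lemma key_transfer (hM : 0 < M)
    (P : Measure Ω) [IsProbabilityMeasure P] (Dm : Measure Z) [IsProbabilityMeasure Dm]
    {L μ : ℝ} (hL : 0 < L) (hμ : 0 ≤ μ)
    {F : E → Z → ℝ} {dF : E → Z → E} {f : E → ℝ} {df : E → E}
    (hsmooth : ∀ᵐ z ∂Dm, SmoothSC L μ (fun x => F x z) (fun x => dF x z))
    (hf : ∀ x, f x = ∫ z, F x z ∂Dm) (hdf : ∀ x, df x = ∫ z, dF x z ∂Dm)
    (hdFjm : Measurable (fun p : E × Z => dF p.1 p.2))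
    (hFint : ∀ x, Integrable (fun z => F x z) Dm)
    (hdFsq : ∀ x, Integrable (fun z => ‖dF x z‖ ^ 2) Dm)
    (xstar : E) (hdfstar : df xstar = 0)
    (hflb : ∀ u : E, 0 ≤ f u - f xstar)
    (hfub : ∀ u : E, f u - f xstar ≤ L / 2 * ‖u - xstar‖ ^ 2)
    (hfmeas : Measurable f) (hdfmeas : Measurable df)
    (X : Ω → (Fin M → E)) (hXm : Measurable X) (W : Ω → Z) (hW : Measurable W)
    (hind : IndepFun X W P) (hlawW : P.map W = Dm) (mm : Fin M)
    (hQt : ∀ m', Integrable (fun ω => ‖X ω m' - xstar‖ ^ 2) P) :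
    (Integrable (fun ω => ‖dF (X ω mm) (W ω)‖ ^ 2) P) ∧
    (∫ ω, ‖dF (X ω mm) (W ω)‖ ^ 2 ∂P
      ≤ 4 * L * (∫ ω, (f (X ω mm) - f xstar) ∂P) + 2 * ∫ w, ‖dF xstar w‖ ^ 2 ∂Dm) ∧
    (Integrable (fun ω => ⟪X ω mm - (M : ℝ)⁻¹ • ∑ j, X ω j, dF (X ω mm) (W ω)⟫_ℝ) P) ∧
    (∫ ω, ⟪X ω mm - (M : ℝ)⁻¹ • ∑ j, X ω j, dF (X ω mm) (W ω)⟫_ℝ ∂P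
      = ∫ ω, ⟪X ω mm - (M : ℝ)⁻¹ • ∑ j, X ω j, df (X ω mm)⟫_ℝ ∂P) := by
  haveI hνprob : IsProbabilityMeasure (P.map X) := Measure.isProbabilityMeasure_map hXm.aemeasurable
  set ν : Measure (Fin M → EuclideanSpace ℝ (Fin d)) := P.map X with hν
  set κ : Measure ((Fin M → EuclideanSpace ℝ (Fin d)) × Z) := ν.prod Dm with hκdef
  haveI : IsProbabilityMeasure κ := by rw [hκdef]; infer_instance
  have hκ : P.map (fun ω => (X ω, W ω)) = κ := map_pair_eq P X W hXm hW hind Dm hlawW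
  have hpairm : Measurable fun ω => (X ω, W ω) := hXm.prodMk hW
  have hem : Measurable fun q : (Fin M → EuclideanSpace ℝ (Fin d)) × Z => q.1 mm :=
    (measurable_pi_apply mm).comp measurable_fst
  have hdFq : Measurable fun q : (Fin M → EuclideanSpace ℝ (Fin d)) × Z => dF (q.1 mm) q.2 :=
    hdFjm.comp (hem.prodMk measurable_snd)
  have hh2m : Measurable fun q : (Fin M → EuclideanSpace ℝ (Fin d)) × Z =>
      ‖dF (q.1 mm) q.2‖ ^ 2 := hdFq.norm.pow_const 2
  have hae : ∀ᵐ q ∂κ, SmoothSC L μ (fun x_ => F x_ q.2) (fun x_ => dF x_ q.2) :=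
    ae_snd_prod hsmooth
  have hνint : ∀ m', Integrable (fun e : Fin M → EuclideanSpace ℝ (Fin d) =>
      ‖e m' - xstar‖ ^ 2) ν := by
    intro m'
    have hm' : Measurable fun e : Fin M → EuclideanSpace ℝ (Fin d) => ‖e m' - xstar‖ ^ 2 :=
      ((measurable_pi_apply m').sub measurable_const).norm.pow_const 2
    exact (integrable_map_measure hm'.aestronglyMeasurable hXm.aemeasurable).2 (hQt m')
  have hh2 : Integrable (fun q : (Fin M → EuclideanSpace ℝ (Fin d)) × Z =>
      ‖dF (q.1 mm) q.2‖ ^ 2) κ := by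
    have hbound_int : Integrable (fun q : (Fin M → EuclideanSpace ℝ (Fin d)) × Z =>
        2 * L ^ 2 * ‖q.1 mm - xstar‖ ^ 2 + 2 * ‖dF xstar q.2‖ ^ 2) κ := by
      have h1 : Integrable (fun e : Fin M → EuclideanSpace ℝ (Fin d) =>
          2 * L ^ 2 * ‖e mm - xstar‖ ^ 2) ν := (hνint mm).const_mul _
      have h2 : Integrable (fun w : Z => 2 * ‖dF xstar w‖ ^ 2) Dm := (hdFsq xstar).const_mul _
      exact (integrable_fst_prod h1).add (integrable_snd_prod h2)
    refine Integrable.mono hbound_int hh2m.aestronglyMeasurable ?_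
    filter_upwards [hae] with q hq
    have lip : ‖dF (q.1 mm) q.2 - dF xstar q.2‖ ^ 2 ≤ L ^ 2 * ‖q.1 mm - xstar‖ ^ 2 :=
      SmoothSC.lipschitz_sq hL hμ hq (q.1 mm) xstar
    have tri := sq_norm_le_two (dF (q.1 mm) q.2) (dF xstar q.2)
    have hnn : (0:ℝ) ≤ 2 * L ^ 2 * ‖q.1 mm - xstar‖ ^ 2 + 2 * ‖dF xstar q.2‖ ^ 2 := by positivity
    rw [Real.norm_eq_abs, Real.norm_eq_abs, abs_of_nonneg (by positivity), abs_of_nonneg hnn]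
    linarith
  have hC1 : Integrable (fun ω => ‖dF (X ω mm) (W ω)‖ ^ 2) P := by
    have hiff := integrable_map_measure (f := fun ω => (X ω, W ω))
      (g := fun q : (Fin M → EuclideanSpace ℝ (Fin d)) × Z => ‖dF (q.1 mm) q.2‖ ^ 2)
      (by rw [hκ]; exact hh2m.aestronglyMeasurable) hpairm.aemeasurable
    rw [hκ] at hiff
    exact hiff.1 hh2
  have hmeasf : Measurable fun e : Fin M → EuclideanSpace ℝ (Fin d) => f (e mm) - f xstar :=
    (hfmeas.comp (measurable_pi_apply mm)).sub measurable_const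
  have hfν : Integrable (fun e : Fin M → EuclideanSpace ℝ (Fin d) => f (e mm) - f xstar) ν := by
    refine Integrable.mono ((hνint mm).const_mul (L / 2)) hmeasf.aestronglyMeasurable ?_
    filter_upwards with e
    rw [Real.norm_eq_abs, Real.norm_eq_abs, abs_of_nonneg (hflb (e mm)),
      abs_of_nonneg (by positivity)]
    exact hfub (e mm)
  have hψint : Integrable (fun e : Fin M → EuclideanSpace ℝ (Fin d) =>
      ∫ w, ‖dF (e mm) w‖ ^ 2 ∂Dm) ν := hh2.integral_prod_left
  have hψle : ∀ e : Fin M → EuclideanSpace ℝ (Fin d), ∫ w, ‖dF (e mm) w‖ ^ 2 ∂Dm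
      ≤ 4 * L * (f (e mm) - f xstar) + 2 * ∫ w, ‖dF xstar w‖ ^ 2 ∂Dm := by
    intro e
    obtain ⟨hbint, hbeq⟩ := breg_integral Dm hf hdf hdFjm hFint hdFsq (e mm) xstar
    have hbound : ∀ᵐ w ∂Dm, ‖dF (e mm) w‖ ^ 2
        ≤ 4 * L * (F (e mm) w - F xstar w - ⟪dF xstar w, e mm - xstar⟫_ℝ)
          + 2 * ‖dF xstar w‖ ^ 2 := by
      filter_upwards [hsmooth] with w hw
      have coco : ‖dF (e mm) w - dF xstar w‖ ^ 2
          ≤ 2 * L * (F (e mm) w - F xstar w - ⟪dF xstar w, e mm - xstar⟫_ℝ) :=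
        SmoothSC.cocoercive hL hμ hw (e mm) xstar
      have tri := sq_norm_le_two (dF (e mm) w) (dF xstar w)
      linarith
    have hRint : Integrable (fun w =>
        4 * L * (F (e mm) w - F xstar w - ⟪dF xstar w, e mm - xstar⟫_ℝ)
          + 2 * ‖dF xstar w‖ ^ 2) Dm := (hbint.const_mul _).add ((hdFsq xstar).const_mul _)
    have h5 := integral_mono_ae (hdFsq (e mm)) hRint hbound
    rw [integral_add (hbint.const_mul _) ((hdFsq xstar).const_mul _), integral_const_mul _,
      integral_const_mul _, hbeq, hdfstar] at h5
    simp only [inner_zero_left, sub_zero] at h5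
    exact h5
  have hC2 : ∫ ω, ‖dF (X ω mm) (W ω)‖ ^ 2 ∂P
      ≤ 4 * L * (∫ ω, (f (X ω mm) - f xstar) ∂P) + 2 * ∫ w, ‖dF xstar w‖ ^ 2 ∂Dm := by
    have hmean : ∫ ω, ‖dF (X ω mm) (W ω)‖ ^ 2 ∂P
        = ∫ e, (∫ w, ‖dF (e mm) w‖ ^ 2 ∂Dm) ∂ν := by
      have h6 : ∫ ω, ‖dF (X ω mm) (W ω)‖ ^ 2 ∂P
          = ∫ q, ‖dF (q.1 mm) q.2‖ ^ 2 ∂(P.map fun ω => (X ω, W ω)) :=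
        (integral_map hpairm.aemeasurable (by rw [hκ]; exact hh2m.aestronglyMeasurable)).symm
      rw [h6, hκ, hκdef]
      exact MeasureTheory.integral_prod _ hh2
    rw [hmean]
    have h7 : ∫ e, (∫ w, ‖dF (e mm) w‖ ^ 2 ∂Dm) ∂ν
        ≤ ∫ e, (4 * L * (f (e mm) - f xstar) + 2 * ∫ w, ‖dF xstar w‖ ^ 2 ∂Dm) ∂ν :=
      integral_mono hψint ((hfν.const_mul _).add (integrable_const _)) hψle
    rw [integral_add (hfν.const_mul _) (integrable_const _), integral_const_mul _,
      integral_const] at h7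
    simp only [measure_univ, probReal_univ, one_smul] at h7
    have h8 : ∫ e, (f (e mm) - f xstar) ∂ν = ∫ ω, (f (X ω mm) - f xstar) ∂P := by
      rw [hν]
      exact integral_map hXm.aemeasurable hmeasf.aestronglyMeasurable
    rw [h8] at h7
    exact h7
  have hymm : Measurable fun e : Fin M → EuclideanSpace ℝ (Fin d) =>
      e mm - (M : ℝ)⁻¹ • ∑ j, e j :=
    (measurable_pi_apply mm).sub
      ((Finset.measurable_sum Finset.univ fun j _ => measurable_pi_apply j).fun_const_smul _)
  have hh1m : Measurable fun q : (Fin M → EuclideanSpace ℝ (Fin d)) × Z =>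
      ⟪q.1 mm - (M : ℝ)⁻¹ • ∑ j, q.1 j, dF (q.1 mm) q.2⟫_ℝ :=
    (hymm.comp measurable_fst).inner hdFq
  have hysqν : Integrable (fun e : Fin M → EuclideanSpace ℝ (Fin d) =>
      ‖e mm - (M : ℝ)⁻¹ • ∑ j, e j‖ ^ 2) ν := by
    have hbint : Integrable (fun e : Fin M → EuclideanSpace ℝ (Fin d) =>
        2 * ‖e mm - xstar‖ ^ 2 + 2 * ((M : ℝ)⁻¹ * ∑ j, ‖e j - xstar‖ ^ 2)) ν :=
      ((hνint mm).const_mul 2).add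
        (((integrable_finset_sum Finset.univ fun j _ => hνint j).const_mul
          (M : ℝ)⁻¹).const_mul 2)
    refine Integrable.mono hbint (hymm.norm.pow_const 2).aestronglyMeasurable ?_
    filter_upwards with e
    have h9 : e mm - (M : ℝ)⁻¹ • ∑ j, e j
        = (e mm - xstar) - ((M : ℝ)⁻¹ • ∑ j, e j - xstar) := by abel
    have h10 : ‖(M : ℝ)⁻¹ • ∑ j, e j - xstar‖ ^ 2 ≤ (M : ℝ)⁻¹ * ∑ j, ‖e j - xstar‖ ^ 2 := by
      rw [avg_sub_const hM e xstar]
      have := avg_norm_sq_le hM (fun j => e j - xstar)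
      simpa using this
    have h11 := sq_norm_sub_le (e mm - xstar) ((M : ℝ)⁻¹ • ∑ j, e j - xstar)
    rw [← h9] at h11
    have hnn2 : (0:ℝ) ≤ 2 * ‖e mm - xstar‖ ^ 2 + 2 * ((M : ℝ)⁻¹ * ∑ j, ‖e j - xstar‖ ^ 2) := by
      have : (0:ℝ) ≤ (M : ℝ)⁻¹ * ∑ j, ‖e j - xstar‖ ^ 2 := by positivity
      positivity
    rw [Real.norm_eq_abs, Real.norm_eq_abs, abs_of_nonneg (by positivity), abs_of_nonneg hnn2]
    linarith
  have hh1int : Integrable (fun q : (Fin M → EuclideanSpace ℝ (Fin d)) × Z =>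
      ⟪q.1 mm - (M : ℝ)⁻¹ • ∑ j, q.1 j, dF (q.1 mm) q.2⟫_ℝ) κ := by
    have hbint2 : Integrable (fun q : (Fin M → EuclideanSpace ℝ (Fin d)) × Z =>
        ‖q.1 mm - (M : ℝ)⁻¹ • ∑ j, q.1 j‖ ^ 2 + ‖dF (q.1 mm) q.2‖ ^ 2) κ :=
      (integrable_fst_prod hysqν).add hh2
    refine Integrable.mono hbint2 hh1m.aestronglyMeasurable ?_
    filter_upwards with q
    have h12 := abs_real_inner_le_norm (q.1 mm - (M : ℝ)⁻¹ • ∑ j, q.1 j) (dF (q.1 mm) q.2)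
    have h13 : ‖q.1 mm - (M : ℝ)⁻¹ • ∑ j, q.1 j‖ * ‖dF (q.1 mm) q.2‖
        ≤ ‖q.1 mm - (M : ℝ)⁻¹ • ∑ j, q.1 j‖ ^ 2 + ‖dF (q.1 mm) q.2‖ ^ 2 := by
      nlinarith [sq_nonneg (‖q.1 mm - (M : ℝ)⁻¹ • ∑ j, q.1 j‖ - ‖dF (q.1 mm) q.2‖),
        norm_nonneg (q.1 mm - (M : ℝ)⁻¹ • ∑ j, q.1 j), norm_nonneg (dF (q.1 mm) q.2)]
    rw [Real.norm_eq_abs, Real.norm_eq_abs, abs_of_nonneg (by positivity :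
      (0:ℝ) ≤ ‖q.1 mm - (M : ℝ)⁻¹ • ∑ j, q.1 j‖ ^ 2 + ‖dF (q.1 mm) q.2‖ ^ 2)]
    linarith
  have hC3 : Integrable (fun ω => ⟪X ω mm - (M : ℝ)⁻¹ • ∑ j, X ω j,
      dF (X ω mm) (W ω)⟫_ℝ) P := by
    have hiff := integrable_map_measure (f := fun ω => (X ω, W ω))
      (g := fun q : (Fin M → EuclideanSpace ℝ (Fin d)) × Z =>
        ⟪q.1 mm - (M : ℝ)⁻¹ • ∑ j, q.1 j, dF (q.1 mm) q.2⟫_ℝ)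
      (by rw [hκ]; exact hh1m.aestronglyMeasurable) hpairm.aemeasurable
    rw [hκ] at hiff
    exact hiff.1 hh1int
  refine ⟨hC1, hC2, hC3, ?_⟩
  have hinner_e : ∀ e : Fin M → EuclideanSpace ℝ (Fin d),
      ∫ w, ⟪e mm - (M : ℝ)⁻¹ • ∑ j, e j, dF (e mm) w⟫_ℝ ∂Dm
        = ⟪e mm - (M : ℝ)⁻¹ • ∑ j, e j, df (e mm)⟫_ℝ := by
    intro e
    rw [integral_inner (int_dF_of_sq Dm hdFjm (e mm) (hdFsq (e mm)))
      (e mm - (M : ℝ)⁻¹ • ∑ j, e j), ← hdf]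
  have hLHS : ∫ ω, ⟪X ω mm - (M : ℝ)⁻¹ • ∑ j, X ω j, dF (X ω mm) (W ω)⟫_ℝ ∂P
      = ∫ e, ⟪e mm - (M : ℝ)⁻¹ • ∑ j, e j, df (e mm)⟫_ℝ ∂ν := by
    have h6 : ∫ ω, ⟪X ω mm - (M : ℝ)⁻¹ • ∑ j, X ω j, dF (X ω mm) (W ω)⟫_ℝ ∂P
        = ∫ q, ⟪q.1 mm - (M : ℝ)⁻¹ • ∑ j, q.1 j, dF (q.1 mm) q.2⟫_ℝ
            ∂(P.map fun ω => (X ω, W ω)) :=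
      (integral_map hpairm.aemeasurable (by rw [hκ]; exact hh1m.aestronglyMeasurable)).symm
    rw [h6, hκ, hκdef, MeasureTheory.integral_prod _ hh1int]
    exact integral_congr_ae (Filter.Eventually.of_forall fun e => hinner_e e)
  rw [hLHS, hν]
  have hinnm : Measurable fun e : Fin M → EuclideanSpace ℝ (Fin d) =>
      ⟪e mm - (M : ℝ)⁻¹ • ∑ j, e j, df (e mm)⟫_ℝ :=
    hymm.inner (hdfmeas.comp (measurable_pi_apply mm))
  exact integral_map hXm.aemeasurable hinnm.aestronglyMeasurable


end KeyTransfer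

set_option maxHeartbeats 2000000 in
/-- weighted epoch bound on the iterate deviation,
identical data, finite-sum setting. -/
theorem epoch_iterate_deviation_bound {d M H : ℕ} (hM : 0 < M) (hH : 1 ≤ H)
    {Z : Type*} [MeasurableSpace Z] {Ω : Type*} [MeasurableSpace Ω]
    (P : Measure Ω) [IsProbabilityMeasure P]
    (D : Fin M → Measure Z) (hD : ∀ m, IsProbabilityMeasure (D m))
    (L γ : ℝ) (hL : 0 < L) (μ : ℝ) (hμ : 0 ≤ μ)
    (hγ0 : 0 < γ)
    (F : EuclideanSpace ℝ (Fin d) → Z → ℝ) (dF : EuclideanSpace ℝ (Fin d) → Z → EuclideanSpace ℝ (Fin d))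
    (f : EuclideanSpace ℝ (Fin d) → ℝ) (df : EuclideanSpace ℝ (Fin d) → EuclideanSpace ℝ (Fin d))
    (hsmooth : ∀ m, ∀ᵐ z ∂(D m), SmoothSC L μ (fun x => F x z) (fun x => dF x z))
    (hf : ∀ m x, f x = ∫ z, F x z ∂(D m))
    (hdf : ∀ m x, df x = ∫ z, dF x z ∂(D m))
    (hFjm : Measurable (fun p : EuclideanSpace ℝ (Fin d) × Z => F p.1 p.2))
    (hdFjm : Measurable (fun p : EuclideanSpace ℝ (Fin d) × Z => dF p.1 p.2))
    (hFint : ∀ m x, Integrable (fun z => F x z) (D m))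
    (hdFsq : ∀ m x, Integrable (fun z => ‖dF x z‖ ^ 2) (D m))
    (xstar : EuclideanSpace ℝ (Fin d)) (hmin : ∀ y, f xstar ≤ f y)
    -- the i.i.d. samples `z t m ∼ D m`, independent over all `(t, m)`
    (z : ℕ → Fin M → Ω → Z) (hz : ∀ t m, Measurable (z t m))
    (hindep : iIndepFun (fun p : ℕ × Fin M => z p.1 p.2) P)
    (hlaw : ∀ t m, P.map (z t m) = D m)
    -- local iterates of Local SGD, with stochastic gradients `dF (x t m ω) (z t m ω)`
    (x : ℕ → Fin M → Ω → EuclideanSpace ℝ (Fin d)) (x0 : EuclideanSpace ℝ (Fin d))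
    (hx0 : ∀ m ω, x 0 m ω = x0)
    (hxmeas : ∀ t m, Measurable (x t m))
    -- synchronization times `s 0 = 0 < s 1 < s 2 < ⋯` with gaps at most `H`
    (s : ℕ → ℕ) (hs0 : s 0 = 0) (hsmono : StrictMono s)
    (hgap : ∀ p, s (p + 1) ≤ s p + H)
    -- Local SGD dynamics
    (hsync : ∀ t m ω, (∃ p, s p = t + 1) →
      x (t + 1) m ω = (M : ℝ)⁻¹ • ∑ j, (x t j ω - γ • dF (x t j ω) (z t j ω)))
    (hlocal : ∀ t m ω, ¬(∃ p, s p = t + 1) →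
      x (t + 1) m ω = x t m ω - γ • dF (x t m ω) (z t m ω))
    (sopt2 : ℝ)
    (hsopt2 : sopt2 = (M : ℝ)⁻¹ * ∑ m, ∫ w, ‖dF xstar w‖ ^ 2 ∂(D m))
    (hγ : γ ≤ 1 / (2 * L)) :
    ∀ p : ℕ,
      (∑ t ∈ Finset.Icc (s p) (s (p + 1) - 1), (1 - γ * μ) ^ (s (p + 1) - 1 - t) *
          ∫ ω, (M : ℝ)⁻¹ * ∑ m, ‖x t m ω - (M : ℝ)⁻¹ • ∑ j, x t j ω‖ ^ 2 ∂P) ≤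
        2 * γ * ((H : ℝ) - 1) / (1 - γ * μ) *
            ∑ t ∈ Finset.Icc (s p) (s (p + 1) - 1), (1 - γ * μ) ^ (s (p + 1) - 1 - t) *
              ∫ ω, Breg f df ((M : ℝ)⁻¹ • ∑ m, x t m ω) xstar ∂P +
          2 * γ ^ 2 * sopt2 * ((H : ℝ) - 1) *
            ∑ t ∈ Finset.Icc (s p) (s (p + 1) - 1), (1 - γ * μ) ^ (s (p + 1) - 1 - t) := by
  classical
  intro p
  have hsp : s p < s (p + 1) := hsmono (Nat.lt_succ_self p)
  set t0 := s p with ht0def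
  set v := s (p + 1) - 1 with hvdef
  have hv1 : v + 1 = s (p + 1) := by omega
  have ht0v : t0 ≤ v := by omega
  have hvt0H : v - t0 ≤ H - 1 := by have := hgap p; omega
  have hnosync : ∀ t, t0 ≤ t → t + 1 ≤ v → ¬ ∃ q, s q = t + 1 := by
    rintro t h1 h2 ⟨q, hq⟩
    have hlow : s p < s q := by omega
    have hhigh : s q < s (p + 1) := by omega
    have h3 : p < q := hsmono.lt_iff_lt.1 hlow
    have h4 : q < p + 1 := hsmono.lt_iff_lt.1 hhigh
    omega
  rcases Nat.eq_zero_or_pos d with hd | hd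
  · -- degenerate dimension-zero case
    subst hd
    haveI : Subsingleton (EuclideanSpace ℝ (Fin 0)) := ⟨fun a b => by ext i; exact i.elim0⟩
    have hV0 : ∀ t : ℕ, (fun ω => (M : ℝ)⁻¹ *
        ∑ m, ‖x t m ω - (M : ℝ)⁻¹ • ∑ j, x t j ω‖ ^ 2) = fun _ : Ω => (0:ℝ) := by
      intro t; funext ω
      have h5 : ∀ m : Fin M, ‖x t m ω - (M : ℝ)⁻¹ • ∑ j, x t j ω‖ ^ 2 = 0 := fun m => by
        rw [Subsingleton.elim (x t m ω - (M : ℝ)⁻¹ • ∑ j, x t j ω) 0, norm_zero]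
        norm_num
      rw [Finset.sum_congr rfl fun m _ => h5 m]
      simp
    have hB0 : ∀ t : ℕ, (fun ω => Breg f df ((M : ℝ)⁻¹ • ∑ m, x t m ω) xstar)
        = fun _ : Ω => (0:ℝ) := by
      intro t; funext ω
      rw [Subsingleton.elim ((M : ℝ)⁻¹ • ∑ m, x t m ω) xstar]
      simp [Breg]
    have hsopt0 : sopt2 = 0 := by
      rw [hsopt2]
      have h6 : ∀ mm : Fin M, ∫ w, ‖dF xstar w‖ ^ 2 ∂(D mm) = 0 := fun mm => by
        have h7 : (fun w => ‖dF xstar w‖ ^ 2) = fun _ : Z => (0:ℝ) := funext fun w => by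
          rw [Subsingleton.elim (dF xstar w) 0, norm_zero]; norm_num
        rw [h7, integral_zero]
      rw [Finset.sum_congr rfl fun mm _ => h6 mm]
      simp
    have hL0 : (∑ t ∈ Finset.Icc t0 v, (1 - γ * μ) ^ (v - t) *
        ∫ ω, (M : ℝ)⁻¹ * ∑ m, ‖x t m ω - (M : ℝ)⁻¹ • ∑ j, x t j ω‖ ^ 2 ∂P) = 0 :=
      Finset.sum_eq_zero fun t _ => by rw [hV0 t, integral_zero, mul_zero]
    have hR0 : (∑ t ∈ Finset.Icc t0 v, (1 - γ * μ) ^ (v - t) *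
        ∫ ω, Breg f df ((M : ℝ)⁻¹ • ∑ m, x t m ω) xstar ∂P) = 0 :=
      Finset.sum_eq_zero fun t _ => by rw [hB0 t, integral_zero, mul_zero]
    rw [hL0, hR0, hsopt0]
    simp
  -- main case `0 < d`
  have hM' : (0:ℝ) < M := by exact_mod_cast hM
  have hLhalf : γ * L ≤ 1 / 2 := by
    have h1 := (le_div_iff₀ (by positivity : (0:ℝ) < 2 * L)).1 hγ
    nlinarith
  have hμL : μ ≤ L := by
    haveI := hD ⟨0, hM⟩
    haveI : (MeasureTheory.ae (D ⟨0, hM⟩)).NeBot := ae_neBot.2 (IsProbabilityMeasure.ne_zero _)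
    obtain ⟨zw, hzw⟩ := (hsmooth ⟨0, hM⟩).exists
    have hnu : ‖(EuclideanSpace.single (⟨0, hd⟩ : Fin d) (1:ℝ)) - 0‖ ^ 2 = 1 := by
      rw [sub_zero, EuclideanSpace.norm_single]; norm_num
    have h1 := (hzw (EuclideanSpace.single (⟨0, hd⟩ : Fin d) (1:ℝ)) 0).1
    have h2 := (hzw (EuclideanSpace.single (⟨0, hd⟩ : Fin d) (1:ℝ)) 0).2
    rw [hnu] at h1 h2
    linarith
  have hα0 : 0 < 1 - γ * μ := by nlinarith
  have hsoptnn : 0 ≤ sopt2 := by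
    rw [hsopt2]
    have h1 : ∀ mm : Fin M, 0 ≤ ∫ w, ‖dF xstar w‖ ^ 2 ∂(D mm) := fun mm =>
      integral_nonneg fun w => by positivity
    exact mul_nonneg (by positivity) (Finset.sum_nonneg fun mm _ => h1 mm)
  have h4L : 4 * L * γ ^ 2 ≤ 2 * γ := by nlinarith
  have hfs : SmoothSC L μ f df := by
    haveI := hD ⟨0, hM⟩
    exact f_smoothSC (D ⟨0, hM⟩) (hsmooth _) (hf _) (hdf _) hdFjm (hFint _) (hdFsq _)
  have hdfstar : df xstar = 0 := df_star_zero hL hfs xstar hmin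
  have hflb : ∀ u, 0 ≤ f u - f xstar := fun u => sub_nonneg.2 (hmin u)
  have hfub : ∀ u, f u - f xstar ≤ L / 2 * ‖u - xstar‖ ^ 2 := by
    intro u
    have h1 := (hfs u xstar).2
    rw [hdfstar] at h1
    simpa using h1
  have hBregEq : ∀ u, Breg f df u xstar = f u - f xstar := by
    intro u
    show f u - f xstar - ⟪df xstar, u - xstar⟫_ℝ = f u - f xstar
    rw [hdfstar]
    simp
  have hfmeas : Measurable f := by
    haveI := hD ⟨0, hM⟩
    have hfe : f = fun x_ => ∫ z, F x_ z ∂(D ⟨0, hM⟩) := funext (hf ⟨0, hM⟩)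
    rw [hfe]
    exact (hFjm.stronglyMeasurable.integral_prod_right').measurable
  have hdfmeas : Measurable df := by
    haveI := hD ⟨0, hM⟩
    have hdfe : df = fun x_ => ∫ z, dF x_ z ∂(D ⟨0, hM⟩) := funext (hdf ⟨0, hM⟩)
    rw [hdfe]
    exact (hdFjm.stronglyMeasurable.integral_prod_right').measurable
  have hXmeas : ∀ t, Measurable fun ω => (fun j => x t j ω) := fun t =>
    measurable_pi_lambda _ fun j => hxmeas t j
  have hXind := rep_indep P γ dF hdFjm z hz hindep x x0 hx0 s hsync hlocal
  have hKey : ∀ t (mm : Fin M), (∀ m', Integrable (fun ω => ‖x t m' ω - xstar‖ ^ 2) P) →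
      (Integrable (fun ω => ‖dF (x t mm ω) (z t mm ω)‖ ^ 2) P) ∧
      (∫ ω, ‖dF (x t mm ω) (z t mm ω)‖ ^ 2 ∂P
        ≤ 4 * L * (∫ ω, (f (x t mm ω) - f xstar) ∂P) + 2 * ∫ w, ‖dF xstar w‖ ^ 2 ∂(D mm)) ∧
      (Integrable (fun ω =>
        ⟪x t mm ω - (M : ℝ)⁻¹ • ∑ j, x t j ω, dF (x t mm ω) (z t mm ω)⟫_ℝ) P) ∧
      (∫ ω, ⟪x t mm ω - (M : ℝ)⁻¹ • ∑ j, x t j ω, dF (x t mm ω) (z t mm ω)⟫_ℝ ∂P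
        = ∫ ω, ⟪x t mm ω - (M : ℝ)⁻¹ • ∑ j, x t j ω, df (x t mm ω)⟫_ℝ ∂P) := by
    intro t mm hQt
    haveI := hD mm
    exact key_transfer hM P (D mm) hL hμ (hsmooth mm) (hf mm) (hdf mm) hdFjm (hFint mm)
      (hdFsq mm) xstar hdfstar hflb hfub hfmeas hdfmeas
      (fun ω => (fun j => x t j ω)) (hXmeas t) (z t mm) (hz t mm) (hXind t mm) (hlaw t mm)
      mm hQt
  have hQ : ∀ t (m' : Fin M), Integrable (fun ω => ‖x t m' ω - xstar‖ ^ 2) P := by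
    intro t
    induction t with
    | zero =>
      intro m'
      have h1 : (fun ω => ‖x 0 m' ω - xstar‖ ^ 2) = fun _ : Ω => ‖x0 - xstar‖ ^ 2 :=
        funext fun ω => by rw [hx0]
      rw [h1]
      exact integrable_const _
    | succ t ih =>
      have hG : ∀ mm : Fin M, Integrable (fun ω => ‖dF (x t mm ω) (z t mm ω)‖ ^ 2) P :=
        fun mm => (hKey t mm ih).1
      intro m'
      have hmeas : Measurable fun ω => ‖x (t+1) m' ω - xstar‖ ^ 2 :=
        ((hxmeas (t+1) m').sub measurable_const).norm.pow_const 2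
      by_cases hsy : ∃ q, s q = t + 1
      · have hb : ∀ ω, ‖x (t+1) m' ω - xstar‖ ^ 2
            ≤ (M : ℝ)⁻¹ * ∑ j, (2 * ‖x t j ω - xstar‖ ^ 2
                + 2 * (γ ^ 2 * ‖dF (x t j ω) (z t j ω)‖ ^ 2)) := by
          intro ω
          rw [hsync t m' ω hsy]
          have h1 : (M : ℝ)⁻¹ • ∑ j, (x t j ω - γ • dF (x t j ω) (z t j ω)) - xstar
              = (M : ℝ)⁻¹ • ∑ j, ((x t j ω - γ • dF (x t j ω) (z t j ω)) - xstar) :=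
            avg_sub_const hM _ xstar
          rw [h1]
          refine le_trans (avg_norm_sq_le hM _) ?_
          apply mul_le_mul_of_nonneg_left _ (by positivity)
          refine Finset.sum_le_sum fun j _ => ?_
          have h2 : (x t j ω - γ • dF (x t j ω) (z t j ω)) - xstar
              = (x t j ω - xstar) - γ • dF (x t j ω) (z t j ω) := by abel
          rw [h2]
          have h3 := sq_norm_sub_le (x t j ω - xstar) (γ • dF (x t j ω) (z t j ω))
          rw [norm_smul, Real.norm_eq_abs, mul_pow, sq_abs] at h3
          linarith
        refine Integrable.mono (Integrable.const_mul (integrable_finset_sum Finset.univ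
          fun j _ => ((ih j).const_mul 2).add (((hG j).const_mul (γ ^ 2)).const_mul 2))
          ((M : ℝ)⁻¹)) hmeas.aestronglyMeasurable ?_
        filter_upwards with ω
        simp only [Pi.add_apply]
        have hnn1 : (0:ℝ) ≤ ‖x (t+1) m' ω - xstar‖ ^ 2 := by positivity
        have hnn2 : (0:ℝ) ≤ (M : ℝ)⁻¹ * ∑ j, (2 * ‖x t j ω - xstar‖ ^ 2
            + 2 * (γ ^ 2 * ‖dF (x t j ω) (z t j ω)‖ ^ 2)) :=
          mul_nonneg (by positivity) (Finset.sum_nonneg fun j _ => by positivity)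
        rw [Real.norm_eq_abs, Real.norm_eq_abs, abs_of_nonneg hnn1, abs_of_nonneg hnn2]
        exact hb ω
      · have hb : ∀ ω, ‖x (t+1) m' ω - xstar‖ ^ 2
            ≤ 2 * ‖x t m' ω - xstar‖ ^ 2
              + 2 * (γ ^ 2 * ‖dF (x t m' ω) (z t m' ω)‖ ^ 2) := by
          intro ω
          rw [hlocal t m' ω hsy]
          have h2 : (x t m' ω - γ • dF (x t m' ω) (z t m' ω)) - xstar
              = (x t m' ω - xstar) - γ • dF (x t m' ω) (z t m' ω) := by abel
          rw [h2]
          have h3 := sq_norm_sub_le (x t m' ω - xstar) (γ • dF (x t m' ω) (z t m' ω))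
          rw [norm_smul, Real.norm_eq_abs, mul_pow, sq_abs] at h3
          linarith
        refine Integrable.mono (((ih m').const_mul 2).add
          (((hG m').const_mul (γ ^ 2)).const_mul 2)) hmeas.aestronglyMeasurable ?_
        filter_upwards with ω
        simp only [Pi.add_apply]
        have hnn1 : (0:ℝ) ≤ ‖x (t+1) m' ω - xstar‖ ^ 2 := by positivity
        have hnn2 : (0:ℝ) ≤ 2 * ‖x t m' ω - xstar‖ ^ 2
            + 2 * (γ ^ 2 * ‖dF (x t m' ω) (z t m' ω)‖ ^ 2) := by positivity
        rw [Real.norm_eq_abs, Real.norm_eq_abs, abs_of_nonneg hnn1, abs_of_nonneg hnn2]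
        exact hb ω
  -- per-node squared deviation integrability
  have hYsq : ∀ t (m : Fin M), Integrable
      (fun ω => ‖x t m ω - (M : ℝ)⁻¹ • ∑ j, x t j ω‖ ^ 2) P := by
    intro t m
    have hmeasy : Measurable fun ω => ‖x t m ω - (M : ℝ)⁻¹ • ∑ j, x t j ω‖ ^ 2 :=
      ((hxmeas t m).sub ((Finset.measurable_sum Finset.univ
        fun j _ => hxmeas t j).fun_const_smul _)).norm.pow_const 2
    refine Integrable.mono (((hQ t m).const_mul 2).add
      ((Integrable.const_mul (integrable_finset_sum Finset.univ fun j _ => hQ t j)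
        ((M : ℝ)⁻¹)).const_mul 2)) hmeasy.aestronglyMeasurable ?_
    filter_upwards with ω
    simp only [Pi.add_apply]
    have h9 : x t m ω - (M : ℝ)⁻¹ • ∑ j, x t j ω
        = (x t m ω - xstar) - ((M : ℝ)⁻¹ • ∑ j, x t j ω - xstar) := by abel
    have h10 : ‖(M : ℝ)⁻¹ • ∑ j, x t j ω - xstar‖ ^ 2
        ≤ (M : ℝ)⁻¹ * ∑ j, ‖x t j ω - xstar‖ ^ 2 := by
      rw [avg_sub_const hM _ xstar]
      have := avg_norm_sq_le hM (fun j => x t j ω - xstar)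
      simpa using this
    have h11 := sq_norm_sub_le (x t m ω - xstar) ((M : ℝ)⁻¹ • ∑ j, x t j ω - xstar)
    rw [← h9] at h11
    have hnn1 : (0:ℝ) ≤ ‖x t m ω - (M : ℝ)⁻¹ • ∑ j, x t j ω‖ ^ 2 := by positivity
    have hnn2 : (0:ℝ) ≤ 2 * ‖x t m ω - xstar‖ ^ 2
        + 2 * ((M : ℝ)⁻¹ * ∑ j, ‖x t j ω - xstar‖ ^ 2) := by
      have h12 : (0:ℝ) ≤ (M : ℝ)⁻¹ * ∑ j, ‖x t j ω - xstar‖ ^ 2 :=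
        mul_nonneg (by positivity) (Finset.sum_nonneg fun j _ => by positivity)
      have h13 : (0:ℝ) ≤ 2 * ‖x t m ω - xstar‖ ^ 2 := by positivity
      linarith
    rw [Real.norm_eq_abs, Real.norm_eq_abs, abs_of_nonneg hnn1, abs_of_nonneg hnn2]
    linarith
  have hIntV : ∀ t, Integrable
      (fun ω => (M : ℝ)⁻¹ * ∑ m, ‖x t m ω - (M : ℝ)⁻¹ • ∑ j, x t j ω‖ ^ 2) P := fun t =>
    (integrable_finset_sum Finset.univ fun m _ => hYsq t m).const_mul _
  have hIntfm : ∀ t (mm : Fin M), Integrable (fun ω => f (x t mm ω) - f xstar) P := by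
    intro t mm
    refine Integrable.mono ((hQ t mm).const_mul (L / 2))
      (((hfmeas.comp (hxmeas t mm)).sub measurable_const)).aestronglyMeasurable ?_
    filter_upwards with ω
    rw [Real.norm_eq_abs, Real.norm_eq_abs, abs_of_nonneg (hflb _),
      abs_of_nonneg (by positivity)]
    exact hfub _
  have hQhat : ∀ t, Integrable (fun ω => ‖(M : ℝ)⁻¹ • ∑ m, x t m ω - xstar‖ ^ 2) P := by
    intro t
    have hmeash : Measurable fun ω => ‖(M : ℝ)⁻¹ • ∑ m, x t m ω - xstar‖ ^ 2 :=
      (((Finset.measurable_sum Finset.univ fun j _ => hxmeas t j).fun_const_smul _).sub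
        measurable_const).norm.pow_const 2
    refine Integrable.mono (Integrable.const_mul
      (integrable_finset_sum Finset.univ fun j _ => hQ t j) ((M : ℝ)⁻¹))
      hmeash.aestronglyMeasurable ?_
    filter_upwards with ω
    have h10 : ‖(M : ℝ)⁻¹ • ∑ j, x t j ω - xstar‖ ^ 2
        ≤ (M : ℝ)⁻¹ * ∑ j, ‖x t j ω - xstar‖ ^ 2 := by
      rw [avg_sub_const hM _ xstar]
      have := avg_norm_sq_le hM (fun j => x t j ω - xstar)
      simpa using this
    have hnn2 : (0:ℝ) ≤ (M : ℝ)⁻¹ * ∑ j, ‖x t j ω - xstar‖ ^ 2 :=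
      mul_nonneg (by positivity) (Finset.sum_nonneg fun j _ => by positivity)
    rw [Real.norm_eq_abs, Real.norm_eq_abs, abs_of_nonneg (by positivity),
      abs_of_nonneg hnn2]
    exact h10
  have hIntfhat : ∀ t, Integrable
      (fun ω => f ((M : ℝ)⁻¹ • ∑ m, x t m ω) - f xstar) P := by
    intro t
    have hhatmeas : Measurable fun ω => (M : ℝ)⁻¹ • ∑ m, x t m ω :=
      (Finset.measurable_sum Finset.univ fun j _ => hxmeas t j).fun_const_smul _
    refine Integrable.mono ((hQhat t).const_mul (L / 2))
      ((hfmeas.comp hhatmeas).sub measurable_const).aestronglyMeasurable ?_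
    filter_upwards with ω
    rw [Real.norm_eq_abs, Real.norm_eq_abs, abs_of_nonneg (hflb _),
      abs_of_nonneg (by positivity)]
    exact hfub _
  have hBnn : ∀ t, 0 ≤ ∫ ω, Breg f df ((M : ℝ)⁻¹ • ∑ m, x t m ω) xstar ∂P := by
    intro t
    refine integral_nonneg fun ω => ?_
    simp only [hBregEq]
    exact hflb _
  have hBint : ∀ t, Integrable
      (fun ω => Breg f df ((M : ℝ)⁻¹ • ∑ m, x t m ω) xstar) P := by
    intro t
    have he : (fun ω => Breg f df ((M : ℝ)⁻¹ • ∑ m, x t m ω) xstar)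
        = fun ω => f ((M : ℝ)⁻¹ • ∑ m, x t m ω) - f xstar := funext fun ω => hBregEq _
    rw [he]
    exact hIntfhat t
  -- deviation vanishes at the synchronization time t0
  have hAt0 : (∫ ω, (M : ℝ)⁻¹ * ∑ m, ‖x t0 m ω - (M : ℝ)⁻¹ • ∑ j, x t0 j ω‖ ^ 2 ∂P) = 0 := by
    have hsame : ∀ (m : Fin M) ω, x t0 m ω = x t0 ⟨0, hM⟩ ω := by
      intro m ω
      rcases Nat.eq_zero_or_pos t0 with h0 | hpos
      · simp only [h0]
        rw [hx0, hx0]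
      · obtain ⟨t', ht'⟩ : ∃ t', t0 = t' + 1 := ⟨t0 - 1, by omega⟩
        have hsy : ∃ q, s q = t' + 1 := ⟨p, by omega⟩
        simp only [ht']
        rw [hsync t' m ω hsy, hsync t' ⟨0, hM⟩ ω hsy]
    have hzero : (fun ω => (M : ℝ)⁻¹ *
        ∑ m, ‖x t0 m ω - (M : ℝ)⁻¹ • ∑ j, x t0 j ω‖ ^ 2) = fun _ : Ω => (0:ℝ) := by
      funext ω
      have havg : (M : ℝ)⁻¹ • ∑ j, x t0 j ω = x t0 ⟨0, hM⟩ ω := by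
        rw [Finset.sum_congr rfl fun j _ => hsame j ω, Finset.sum_const, Finset.card_univ,
          Fintype.card_fin, ← Nat.cast_smul_eq_nsmul ℝ, smul_smul,
          show (M : ℝ)⁻¹ * M = 1 by field_simp, one_smul]
      have hterm : ∀ m : Fin M, ‖x t0 m ω - (M : ℝ)⁻¹ • ∑ j, x t0 j ω‖ ^ 2 = 0 := by
        intro m
        rw [havg, hsame m ω, sub_self, norm_zero]
        norm_num
      rw [Finset.sum_congr rfl fun m _ => hterm m]
      simp
    rw [hzero, integral_zero]
  -- the one-step recursion within the epoch
  have hrec : ∀ t, t0 ≤ t → t + 1 ≤ v →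
      (∫ ω, (M : ℝ)⁻¹ * ∑ m, ‖x (t+1) m ω - (M : ℝ)⁻¹ • ∑ j, x (t+1) j ω‖ ^ 2 ∂P)
        ≤ (1 - γ * μ) * (∫ ω, (M : ℝ)⁻¹ *
              ∑ m, ‖x t m ω - (M : ℝ)⁻¹ • ∑ j, x t j ω‖ ^ 2 ∂P)
          + (2 * γ * (∫ ω, Breg f df ((M : ℝ)⁻¹ • ∑ m, x t m ω) xstar ∂P)
            + 2 * γ ^ 2 * sopt2) := by
    intro t hta htb
    have hnos := hnosync t hta htb
    have hx1 : ∀ (m : Fin M) ω, x (t+1) m ω = x t m ω - γ • dF (x t m ω) (z t m ω) :=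
      fun m ω => hlocal t m ω hnos
    have hpt : ∀ ω, (M : ℝ)⁻¹ * ∑ m, ‖x (t+1) m ω - (M : ℝ)⁻¹ • ∑ j, x (t+1) j ω‖ ^ 2
        ≤ (M : ℝ)⁻¹ * ∑ m, ‖x t m ω - (M : ℝ)⁻¹ • ∑ j, x t j ω‖ ^ 2
          - 2 * γ * ((M : ℝ)⁻¹ * ∑ m, ⟪x t m ω - (M : ℝ)⁻¹ • ∑ j, x t j ω,
              dF (x t m ω) (z t m ω)⟫_ℝ)
          + γ ^ 2 * ((M : ℝ)⁻¹ * ∑ m, ‖dF (x t m ω) (z t m ω)‖ ^ 2) := by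
      intro ω
      have hs := step_pointwise hM γ (fun m => x t m ω) (fun m => dF (x t m ω) (z t m ω))
      simp only [← hx1] at hs
      have h1 := mul_le_mul_of_nonneg_left hs (by positivity : (0:ℝ) ≤ (M : ℝ)⁻¹)
      calc (M : ℝ)⁻¹ * ∑ m, ‖x (t+1) m ω - (M : ℝ)⁻¹ • ∑ j, x (t+1) j ω‖ ^ 2
          ≤ (M : ℝ)⁻¹ * (∑ m, ‖x t m ω - (M : ℝ)⁻¹ • ∑ j, x t j ω‖ ^ 2
            - 2 * γ * ∑ m, ⟪x t m ω - (M : ℝ)⁻¹ • ∑ j, x t j ω,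
                dF (x t m ω) (z t m ω)⟫_ℝ
            + γ ^ 2 * ∑ m, ‖dF (x t m ω) (z t m ω)‖ ^ 2) := h1
        _ = _ := by ring
    have iCm := fun m : Fin M => (hKey t m (hQ t)).2.2.1
    have iGm := fun m : Fin M => (hKey t m (hQ t)).1
    have iC : Integrable (fun ω => (M : ℝ)⁻¹ * ∑ m,
        ⟪x t m ω - (M : ℝ)⁻¹ • ∑ j, x t j ω, dF (x t m ω) (z t m ω)⟫_ℝ) P :=
      (integrable_finset_sum Finset.univ fun m _ => iCm m).const_mul _
    have iG : Integrable (fun ω => (M : ℝ)⁻¹ * ∑ m, ‖dF (x t m ω) (z t m ω)‖ ^ 2) P :=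
      (integrable_finset_sum Finset.univ fun m _ => iGm m).const_mul _
    have iSub : Integrable (fun ω => (M : ℝ)⁻¹ *
        ∑ m, ‖x t m ω - (M : ℝ)⁻¹ • ∑ j, x t j ω‖ ^ 2
          - 2 * γ * ((M : ℝ)⁻¹ * ∑ m, ⟪x t m ω - (M : ℝ)⁻¹ • ∑ j, x t j ω,
              dF (x t m ω) (z t m ω)⟫_ℝ)) P := (hIntV t).sub (iC.const_mul (2 * γ))
    have iRHS : Integrable (fun ω => (M : ℝ)⁻¹ *
        ∑ m, ‖x t m ω - (M : ℝ)⁻¹ • ∑ j, x t j ω‖ ^ 2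
          - 2 * γ * ((M : ℝ)⁻¹ * ∑ m, ⟪x t m ω - (M : ℝ)⁻¹ • ∑ j, x t j ω,
              dF (x t m ω) (z t m ω)⟫_ℝ)
          + γ ^ 2 * ((M : ℝ)⁻¹ * ∑ m, ‖dF (x t m ω) (z t m ω)‖ ^ 2)) P :=
      iSub.add (iG.const_mul (γ ^ 2))
    have hmono := integral_mono (hIntV (t+1)) iRHS hpt
    have hsplit : ∫ ω, ((M : ℝ)⁻¹ * ∑ m, ‖x t m ω - (M : ℝ)⁻¹ • ∑ j, x t j ω‖ ^ 2
          - 2 * γ * ((M : ℝ)⁻¹ * ∑ m, ⟪x t m ω - (M : ℝ)⁻¹ • ∑ j, x t j ω,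
              dF (x t m ω) (z t m ω)⟫_ℝ)
          + γ ^ 2 * ((M : ℝ)⁻¹ * ∑ m, ‖dF (x t m ω) (z t m ω)‖ ^ 2)) ∂P
        = (∫ ω, (M : ℝ)⁻¹ * ∑ m, ‖x t m ω - (M : ℝ)⁻¹ • ∑ j, x t j ω‖ ^ 2 ∂P)
          - 2 * γ * (∫ ω, (M : ℝ)⁻¹ * ∑ m, ⟪x t m ω - (M : ℝ)⁻¹ • ∑ j, x t j ω,
              dF (x t m ω) (z t m ω)⟫_ℝ ∂P)
          + γ ^ 2 * (∫ ω, (M : ℝ)⁻¹ * ∑ m, ‖dF (x t m ω) (z t m ω)‖ ^ 2 ∂P) := by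
      rw [integral_add iSub (iG.const_mul (γ ^ 2)),
        integral_sub (hIntV t) (iC.const_mul (2 * γ)),
        integral_const_mul (2 * γ), integral_const_mul (γ ^ 2)]
    rw [hsplit] at hmono
    have hCswap : ∫ ω, (M : ℝ)⁻¹ * ∑ m, ⟪x t m ω - (M : ℝ)⁻¹ • ∑ j, x t j ω,
        dF (x t m ω) (z t m ω)⟫_ℝ ∂P
        = (M : ℝ)⁻¹ * ∑ m, ∫ ω, ⟪x t m ω - (M : ℝ)⁻¹ • ∑ j, x t j ω,
            dF (x t m ω) (z t m ω)⟫_ℝ ∂P := by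
      rw [integral_const_mul, integral_finset_sum Finset.univ fun m _ => iCm m]
    have hGswap : ∫ ω, (M : ℝ)⁻¹ * ∑ m, ‖dF (x t m ω) (z t m ω)‖ ^ 2 ∂P
        = (M : ℝ)⁻¹ * ∑ m, ∫ ω, ‖dF (x t m ω) (z t m ω)‖ ^ 2 ∂P := by
      rw [integral_const_mul, integral_finset_sum Finset.univ fun m _ => iGm m]
    rw [hCswap, hGswap] at hmono
    have hCdf : (M : ℝ)⁻¹ * ∑ m, ∫ ω, ⟪x t m ω - (M : ℝ)⁻¹ • ∑ j, x t j ω,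
        dF (x t m ω) (z t m ω)⟫_ℝ ∂P
        = (M : ℝ)⁻¹ * ∑ m, ∫ ω, ⟪x t m ω - (M : ℝ)⁻¹ • ∑ j, x t j ω,
            df (x t m ω)⟫_ℝ ∂P := by
      congr 1
      exact Finset.sum_congr rfl fun m _ => (hKey t m (hQ t)).2.2.2
    rw [hCdf] at hmono
    -- integrability of df-cross terms
    have hdfm : ∀ m : Fin M, Integrable (fun ω => ‖df (x t m ω)‖ ^ 2) P := by
      intro m
      refine Integrable.mono ((hQ t m).const_mul (L ^ 2))
        ((hdfmeas.comp (hxmeas t m)).norm.pow_const 2).aestronglyMeasurable ?_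
      filter_upwards with ω
      have hlip : ‖df (x t m ω) - df xstar‖ ^ 2 ≤ L ^ 2 * ‖x t m ω - xstar‖ ^ 2 :=
        SmoothSC.lipschitz_sq hL hμ hfs (x t m ω) xstar
      rw [hdfstar, sub_zero] at hlip
      rw [Real.norm_eq_abs, Real.norm_eq_abs, abs_of_nonneg (by positivity),
        abs_of_nonneg (by positivity)]
      exact hlip
    have iCm' : ∀ m : Fin M, Integrable (fun ω =>
        ⟪x t m ω - (M : ℝ)⁻¹ • ∑ j, x t j ω, df (x t m ω)⟫_ℝ) P := by
      intro m
      have hmeasc : Measurable fun ω =>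
          ⟪x t m ω - (M : ℝ)⁻¹ • ∑ j, x t j ω, df (x t m ω)⟫_ℝ :=
        Measurable.inner ((hxmeas t m).sub ((Finset.measurable_sum Finset.univ
          fun j _ => hxmeas t j).fun_const_smul _)) (hdfmeas.comp (hxmeas t m))
      refine Integrable.mono ((hYsq t m).add (hdfm m)) hmeasc.aestronglyMeasurable ?_
      filter_upwards with ω
      simp only [Pi.add_apply]
      have h12 := abs_real_inner_le_norm (x t m ω - (M : ℝ)⁻¹ • ∑ j, x t j ω) (df (x t m ω))
      have h13 : ‖x t m ω - (M : ℝ)⁻¹ • ∑ j, x t j ω‖ * ‖df (x t m ω)‖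
          ≤ ‖x t m ω - (M : ℝ)⁻¹ • ∑ j, x t j ω‖ ^ 2 + ‖df (x t m ω)‖ ^ 2 := by
        nlinarith [sq_nonneg (‖x t m ω - (M : ℝ)⁻¹ • ∑ j, x t j ω‖ - ‖df (x t m ω)‖),
          norm_nonneg (x t m ω - (M : ℝ)⁻¹ • ∑ j, x t j ω), norm_nonneg (df (x t m ω))]
      rw [Real.norm_eq_abs, Real.norm_eq_abs, abs_of_nonneg (by positivity :
        (0:ℝ) ≤ ‖x t m ω - (M : ℝ)⁻¹ • ∑ j, x t j ω‖ ^ 2 + ‖df (x t m ω)‖ ^ 2)]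
      linarith
    -- pointwise strong-convexity lower bound for the cross term
    have hclow : ∀ ω, (M : ℝ)⁻¹ * ∑ m, (f (x t m ω) - f xstar)
          - (f ((M : ℝ)⁻¹ • ∑ m, x t m ω) - f xstar)
          + μ / 2 * ((M : ℝ)⁻¹ * ∑ m, ‖x t m ω - (M : ℝ)⁻¹ • ∑ j, x t j ω‖ ^ 2)
        ≤ (M : ℝ)⁻¹ * ∑ m, ⟪x t m ω - (M : ℝ)⁻¹ • ∑ j, x t j ω, df (x t m ω)⟫_ℝ := by
      intro ω
      have hsum : ∑ m, (f (x t m ω) - f ((M : ℝ)⁻¹ • ∑ j, x t j ω)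
            + μ / 2 * ‖x t m ω - (M : ℝ)⁻¹ • ∑ j, x t j ω‖ ^ 2)
          ≤ ∑ m, ⟪x t m ω - (M : ℝ)⁻¹ • ∑ j, x t j ω, df (x t m ω)⟫_ℝ :=
        Finset.sum_le_sum fun m _ => strong_conv_inner hμ hfs (x t m ω) _
      have h1 := mul_le_mul_of_nonneg_left hsum (by positivity : (0:ℝ) ≤ (M : ℝ)⁻¹)
      have hLrw : (M : ℝ)⁻¹ * ∑ m, (f (x t m ω) - f ((M : ℝ)⁻¹ • ∑ j, x t j ω)
            + μ / 2 * ‖x t m ω - (M : ℝ)⁻¹ • ∑ j, x t j ω‖ ^ 2)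
          = (M : ℝ)⁻¹ * ∑ m, (f (x t m ω) - f xstar)
            - (f ((M : ℝ)⁻¹ • ∑ m, x t m ω) - f xstar)
            + μ / 2 * ((M : ℝ)⁻¹ * ∑ m, ‖x t m ω - (M : ℝ)⁻¹ • ∑ j, x t j ω‖ ^ 2) := by
        rw [Finset.sum_add_distrib]
        have e0 : ∀ m : Fin M, f (x t m ω) - f ((M : ℝ)⁻¹ • ∑ j, x t j ω)
            = (f (x t m ω) - f xstar) - (f ((M : ℝ)⁻¹ • ∑ j, x t j ω) - f xstar) :=
          fun m => by ring
        rw [Finset.sum_congr rfl fun m _ => e0 m, Finset.sum_sub_distrib,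
          Finset.sum_const, Finset.card_univ, Fintype.card_fin, nsmul_eq_mul,
          ← Finset.mul_sum]
        have hMne : (M : ℝ) ≠ 0 := ne_of_gt hM'
        field_simp
      rw [hLrw] at h1
      exact h1
    -- integrated lower bound
    have iL1 : Integrable (fun ω => (M : ℝ)⁻¹ * ∑ m, (f (x t m ω) - f xstar)) P :=
      (integrable_finset_sum Finset.univ fun m _ => hIntfm t m).const_mul _
    have iR : Integrable (fun ω => (M : ℝ)⁻¹ * ∑ m,
        ⟪x t m ω - (M : ℝ)⁻¹ • ∑ j, x t j ω, df (x t m ω)⟫_ℝ) P :=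
      (integrable_finset_sum Finset.univ fun m _ => iCm' m).const_mul _
    have iLsub : Integrable (fun ω => (M : ℝ)⁻¹ * ∑ m, (f (x t m ω) - f xstar)
        - (f ((M : ℝ)⁻¹ • ∑ m, x t m ω) - f xstar)) P := iL1.sub (hIntfhat t)
    have iLRHS : Integrable (fun ω => (M : ℝ)⁻¹ * ∑ m, (f (x t m ω) - f xstar)
        - (f ((M : ℝ)⁻¹ • ∑ m, x t m ω) - f xstar)
        + μ / 2 * ((M : ℝ)⁻¹ * ∑ m, ‖x t m ω - (M : ℝ)⁻¹ • ∑ j, x t j ω‖ ^ 2)) P :=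
      iLsub.add ((hIntV t).const_mul (μ / 2))
    have hclow_int := integral_mono iLRHS iR hclow
    rw [integral_add iLsub ((hIntV t).const_mul (μ / 2)),
      integral_sub iL1 (hIntfhat t), integral_const_mul (μ / 2)] at hclow_int
    have hDswap : ∫ ω, (M : ℝ)⁻¹ * ∑ m, (f (x t m ω) - f xstar) ∂P
        = (M : ℝ)⁻¹ * ∑ m, ∫ ω, (f (x t m ω) - f xstar) ∂P := by
      rw [integral_const_mul, integral_finset_sum Finset.univ fun m _ => hIntfm t m]
    have hCswap' : ∫ ω, (M : ℝ)⁻¹ * ∑ m, ⟪x t m ω - (M : ℝ)⁻¹ • ∑ j, x t j ω,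
        df (x t m ω)⟫_ℝ ∂P
        = (M : ℝ)⁻¹ * ∑ m, ∫ ω, ⟪x t m ω - (M : ℝ)⁻¹ • ∑ j, x t j ω,
            df (x t m ω)⟫_ℝ ∂P := by
      rw [integral_const_mul, integral_finset_sum Finset.univ fun m _ => iCm' m]
    rw [hDswap, hCswap'] at hclow_int
    -- gradient second moment bound
    have hGup : (M : ℝ)⁻¹ * ∑ m, ∫ ω, ‖dF (x t m ω) (z t m ω)‖ ^ 2 ∂P
        ≤ 4 * L * ((M : ℝ)⁻¹ * ∑ m, ∫ ω, (f (x t m ω) - f xstar) ∂P) + 2 * sopt2 := by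
      have h3 : ∑ m, ∫ ω, ‖dF (x t m ω) (z t m ω)‖ ^ 2 ∂P
          ≤ ∑ m, (4 * L * (∫ ω, (f (x t m ω) - f xstar) ∂P)
            + 2 * ∫ w, ‖dF xstar w‖ ^ 2 ∂(D m)) :=
        Finset.sum_le_sum fun m _ => (hKey t m (hQ t)).2.1
      have h4 := mul_le_mul_of_nonneg_left h3 (by positivity : (0:ℝ) ≤ (M : ℝ)⁻¹)
      have h5 : (M : ℝ)⁻¹ * ∑ m, (4 * L * (∫ ω, (f (x t m ω) - f xstar) ∂P)
            + 2 * ∫ w, ‖dF xstar w‖ ^ 2 ∂(D m))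
          = 4 * L * ((M : ℝ)⁻¹ * ∑ m, ∫ ω, (f (x t m ω) - f xstar) ∂P) + 2 * sopt2 := by
        rw [Finset.sum_add_distrib, hsopt2, mul_add, ← Finset.mul_sum, ← Finset.mul_sum]
        ring
      rw [h5] at h4
      exact h4
    have hDnn : 0 ≤ (M : ℝ)⁻¹ * ∑ m, ∫ ω, (f (x t m ω) - f xstar) ∂P :=
      mul_nonneg (by positivity)
        (Finset.sum_nonneg fun m _ => integral_nonneg fun ω => hflb _)
    have hBrw : ∫ ω, Breg f df ((M : ℝ)⁻¹ • ∑ m, x t m ω) xstar ∂P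
        = ∫ ω, (f ((M : ℝ)⁻¹ • ∑ m, x t m ω) - f xstar) ∂P := by
      congr 1
      funext ω
      exact hBregEq _
    rw [hBrw]
    have k1 := mul_le_mul_of_nonneg_left hclow_int (by positivity : (0:ℝ) ≤ 2 * γ)
    have k2 := mul_le_mul_of_nonneg_left hGup (sq_nonneg γ)
    have k3 : 0 ≤ (2 * γ - 4 * L * γ ^ 2) *
        ((M : ℝ)⁻¹ * ∑ m, ∫ ω, (f (x t m ω) - f xstar) ∂P) :=
      mul_nonneg (by linarith) hDnn
    nlinarith [hmono, k1, k2, k3]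
  -- conclude via the arithmetic epoch-summation lemma
  have hHm : ((H - 1 : ℕ) : ℝ) = (H : ℝ) - 1 := by
    have h1 := Nat.cast_sub (R := ℝ) hH
    simpa using h1
  have hKnn : 0 ≤ 2 * γ ^ 2 * sopt2 := mul_nonneg (by positivity) hsoptnn
  have main := epoch_sum_bound (1 - γ * μ) γ (2 * γ ^ 2 * sopt2) hα0 hγ0 hKnn
    (fun t => ∫ ω, (M : ℝ)⁻¹ * ∑ m, ‖x t m ω - (M : ℝ)⁻¹ • ∑ j, x t j ω‖ ^ 2 ∂P)
    (fun t => ∫ ω, Breg f df ((M : ℝ)⁻¹ • ∑ m, x t m ω) xstar ∂P)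
    t0 v (H - 1) ht0v hvt0H hAt0 (fun t _ _ => hBnn t) hrec
  rw [hHm] at main
  exact main
end

section
/- Let f_1, ..., f_M : ℝ^d → ℝ with f_m(x) = E_{z∼D_m}[f_m(x,z)], each f_m(·,z) almost surely L-smooth and convex, let f = (1/M) Σ_m f_m with minimizer x_*, and let M ≥ 2. Let x^1, ..., x^M ∈ ℝ^d with average x̂ and V = (1/M) Σ_m ‖x^m - x̂‖², and let z_1, ..., z_M be independent with z_m ∼ D_m. Then E‖(1/M) Σ_{m=1}^M ∇f_m(x^m, z_m)‖² ≤ 2L²V + 8L·D_f(x̂, x_*) + 4σ_dif²/M, where σ_dif² = (1/M) Σ_m E_{z_m∼D_m}‖∇f_m(x_*, z_m)‖² and D_f(x,y) = f(x) - f(y) - ⟨∇f(y), x - y⟩. -/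
open MeasureTheory ProbabilityTheory Finset
open scoped InnerProductSpace

lemma smoothsc_coco {d : ℕ} {L : ℝ} (hL : 0 < L) {F : EuclideanSpace ℝ (Fin d) → ℝ}
    {dF : EuclideanSpace ℝ (Fin d) → EuclideanSpace ℝ (Fin d)} (h : SmoothSC L 0 F dF)
    (u v : EuclideanSpace ℝ (Fin d)) :
    ‖dF u - dF v‖ ^ 2 ≤ 2 * L * (F u - F v - ⟪dF v, u - v⟫_ℝ) := by
  set g := dF u - dF v with hgdef
  set w := u - L⁻¹ • g with hwdef
  have h1 := (h w v).1
  have h2 := (h w u).2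
  have hwu : w - u = -(L⁻¹ • g) := by rw [hwdef]; abel
  have hwv : w - v = (u - v) - L⁻¹ • g := by rw [hwdef]; abel
  rw [hwu] at h2
  rw [hwv] at h1
  have e1 : ⟪dF u, -(L⁻¹ • g)⟫_ℝ = -(L⁻¹ * ⟪dF u, g⟫_ℝ) := by
    rw [inner_neg_right, real_inner_smul_right]
  have e2 : ‖-(L⁻¹ • g)‖ ^ 2 = L⁻¹ ^ 2 * ‖g‖ ^ 2 := by
    rw [norm_neg, norm_smul]
    simp [abs_of_pos (inv_pos.mpr hL), mul_pow]
  have e3 : ⟪dF v, (u - v) - L⁻¹ • g⟫_ℝ = ⟪dF v, u - v⟫_ℝ - L⁻¹ * ⟪dF v, g⟫_ℝ := by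
    rw [inner_sub_right, real_inner_smul_right]
  have e4 : ⟪dF u, g⟫_ℝ - ⟪dF v, g⟫_ℝ = ‖g‖ ^ 2 := by
    rw [← inner_sub_left, ← hgdef, real_inner_self_eq_norm_sq]
  rw [e1, e2] at h2
  rw [e3] at h1
  have hLi : L * L⁻¹ = 1 := mul_inv_cancel₀ (ne_of_gt hL)
  have e5 : L⁻¹ * ⟪dF u, g⟫_ℝ - L⁻¹ * ⟪dF v, g⟫_ℝ = L⁻¹ * ‖g‖ ^ 2 := by
    rw [← mul_sub, e4]
  have hD : L⁻¹ * ‖g‖ ^ 2 - L / 2 * (L⁻¹ ^ 2 * ‖g‖ ^ 2) ≤ F u - F v - ⟪dF v, u - v⟫_ℝ := by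
    linarith
  have hD2 := mul_le_mul_of_nonneg_left hD (by positivity : (0:ℝ) ≤ 2 * L)
  have hid : 2 * L * (L⁻¹ * ‖g‖ ^ 2 - L / 2 * (L⁻¹ ^ 2 * ‖g‖ ^ 2)) = ‖g‖ ^ 2 := by
    field_simp
    ring
  linarith [hid ▸ hD2]

lemma smoothsc_grad_sq {d : ℕ} {L : ℝ} (hL : 0 < L) {F : EuclideanSpace ℝ (Fin d) → ℝ}
    {dF : EuclideanSpace ℝ (Fin d) → EuclideanSpace ℝ (Fin d)} (h : SmoothSC L 0 F dF)
    (u v : EuclideanSpace ℝ (Fin d)) :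
    ‖dF u - dF v‖ ^ 2 ≤ L ^ 2 * ‖u - v‖ ^ 2 := by
  have h1 := smoothsc_coco hL h u v
  have h2 := (h u v).2
  nlinarith [hL]

lemma norm_sum_sq_le_card {E : Type*} [NormedAddCommGroup E] {M : ℕ} (a : Fin M → E) :
    ‖∑ m, a m‖ ^ 2 ≤ (M : ℝ) * ∑ m, ‖a m‖ ^ 2 := by
  calc ‖∑ m, a m‖ ^ 2 ≤ (∑ m, ‖a m‖) ^ 2 :=
        pow_le_pow_left₀ (norm_nonneg _) (norm_sum_le Finset.univ a) 2
    _ ≤ (M : ℝ) * ∑ m, ‖a m‖ ^ 2 := by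
        have := sq_sum_le_card_mul_sum_sq (s := (Finset.univ : Finset (Fin M)))
          (f := fun m => ‖a m‖)
        simpa using this

lemma norm_avg_sq_le {E : Type*} [NormedAddCommGroup E] [NormedSpace ℝ E] {M : ℕ}
    (hM : 0 < (M : ℝ)) (a : Fin M → E) :
    ‖(M : ℝ)⁻¹ • ∑ m, a m‖ ^ 2 ≤ (M : ℝ)⁻¹ * ∑ m, ‖a m‖ ^ 2 := by
  rw [norm_smul, Real.norm_eq_abs, abs_of_pos (inv_pos.mpr hM), mul_pow]
  have h1 := norm_sum_sq_le_card a
  have h2 : ((M:ℝ)⁻¹) ^ 2 * ‖∑ m, a m‖ ^ 2 ≤ ((M:ℝ)⁻¹) ^ 2 * ((M:ℝ) * ∑ m, ‖a m‖ ^ 2) := by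
    apply mul_le_mul_of_nonneg_left h1 (by positivity)
  have h3 : ((M:ℝ)⁻¹) ^ 2 * ((M:ℝ) * ∑ m, ‖a m‖ ^ 2) = (M : ℝ)⁻¹ * ∑ m, ‖a m‖ ^ 2 := by
    field_simp
  linarith

lemma norm_add₃_sq_le {E : Type*} [NormedAddCommGroup E] (p q r : E) :
    ‖p + q + r‖ ^ 2 ≤ 2 * ‖p‖ ^ 2 + 4 * ‖q‖ ^ 2 + 4 * ‖r‖ ^ 2 := by
  have h1 : ‖p + q + r‖ ≤ ‖p‖ + ‖q‖ + ‖r‖ :=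
    (norm_add_le _ _).trans (add_le_add_left (norm_add_le p q) _)
  nlinarith [norm_nonneg (p + q + r), norm_nonneg p, norm_nonneg q, norm_nonneg r,
    sq_nonneg (‖p‖ - ‖q‖ - ‖r‖), sq_nonneg (‖q‖ - ‖r‖)]

lemma integral_comp_law {Z Ω : Type*} [MeasurableSpace Z] [MeasurableSpace Ω] {P : Measure Ω}
    {z : Ω → Z} (hz : Measurable z) {ν : Measure Z} (hlaw : P.map z = ν)
    {G : Type*} [NormedAddCommGroup G] [NormedSpace ℝ G] {h : Z → G}
    (hm : AEStronglyMeasurable h ν) :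
    ∫ ω, h (z ω) ∂P = ∫ w, h w ∂ν := by
  subst hlaw
  exact (integral_map hz.aemeasurable hm).symm

lemma integrable_comp_law {Z Ω : Type*} [MeasurableSpace Z] [MeasurableSpace Ω] {P : Measure Ω}
    {z : Ω → Z} (hz : Measurable z) {ν : Measure Z} (hlaw : P.map z = ν)
    {G : Type*} [NormedAddCommGroup G] {h : Z → G}
    (hint : Integrable h ν) :
    Integrable (fun ω => h (z ω)) P := by
  subst hlaw
  exact (integrable_map_measure hint.aestronglyMeasurable hz.aemeasurable).mp hint

set_option maxHeartbeats 2000000 in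
/-- second-moment bound for the averaged heterogeneous stochastic gradient. -/
theorem average_gradient_bound_heterogeneous {d M : ℕ} (hM : 2 ≤ M) (L : ℝ) (hL : 0 < L) {Z : Type*} [MeasurableSpace Z] {Ω : Type*} [MeasurableSpace Ω]
    (P : Measure Ω) [IsProbabilityMeasure P]
    (D : Fin M → Measure Z) (hD : ∀ m, IsProbabilityMeasure (D m))
    (FM : Fin M → EuclideanSpace ℝ (Fin d) → Z → ℝ) (dFM : Fin M → EuclideanSpace ℝ (Fin d) → Z → EuclideanSpace ℝ (Fin d))
    (fm : Fin M → EuclideanSpace ℝ (Fin d) → ℝ) (dfm : Fin M → EuclideanSpace ℝ (Fin d) → EuclideanSpace ℝ (Fin d))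
    (hsmooth : ∀ m, ∀ᵐ z ∂(D m), SmoothSC L 0 (fun x => FM m x z) (fun x => dFM m x z))
    (hfm : ∀ m x, fm m x = ∫ z, FM m x z ∂(D m))
    (hdfm : ∀ m x, dfm m x = ∫ z, dFM m x z ∂(D m))
    (hFjm : ∀ m, Measurable (fun p : EuclideanSpace ℝ (Fin d) × Z => FM m p.1 p.2))
    (hdFjm : ∀ m, Measurable (fun p : EuclideanSpace ℝ (Fin d) × Z => dFM m p.1 p.2))
    (hFint : ∀ m x, Integrable (fun z => FM m x z) (D m))
    (hdFsq : ∀ m x, Integrable (fun z => ‖dFM m x z‖ ^ 2) (D m))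
    (f : EuclideanSpace ℝ (Fin d) → ℝ) (df : EuclideanSpace ℝ (Fin d) → EuclideanSpace ℝ (Fin d))
    (hfdef : ∀ x, f x = (M : ℝ)⁻¹ * ∑ m, fm m x)
    (hdfdef : ∀ x, df x = (M : ℝ)⁻¹ • ∑ m, dfm m x)
    (xstar : EuclideanSpace ℝ (Fin d)) (hmin : ∀ y, f xstar ≤ f y)
    (z : Fin M → Ω → Z) (hz : ∀ m, Measurable (z m))
    (hindep : iIndepFun z P)
    (hlaw : ∀ m, P.map (z m) = D m)
    (sdif2 : ℝ)
    (hsdif2 : sdif2 = (M : ℝ)⁻¹ * ∑ m, ∫ w, ‖dFM m xstar w‖ ^ 2 ∂(D m))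
    (x : Fin M → EuclideanSpace ℝ (Fin d))
    (xhat : EuclideanSpace ℝ (Fin d)) (hxhat : xhat = (M : ℝ)⁻¹ • ∑ m, x m)
    (Vdev : ℝ) (hV : Vdev = (M : ℝ)⁻¹ * ∑ m, ‖x m - xhat‖ ^ 2) :
    (∫ ω, ‖(M : ℝ)⁻¹ • ∑ m, dFM m (x m) (z m ω)‖ ^ 2 ∂P) ≤
      2 * L ^ 2 * Vdev + 8 * L * Breg f df xhat xstar + 4 * sdif2 / M := by
  classical
  have hMpos : (0:ℝ) < M := by
    have : (0:ℕ) < M := lt_of_lt_of_le (by norm_num) hM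
    exact_mod_cast this
  have hMne : (M:ℝ) ≠ 0 := ne_of_gt hMpos
  -- measurability of sections
  have mdF : ∀ m (y : EuclideanSpace ℝ (Fin d)), Measurable (fun w => dFM m y w) :=
    fun m y => (hdFjm m).comp (measurable_const.prodMk measurable_id)
  have mF : ∀ m (y : EuclideanSpace ℝ (Fin d)), Measurable (fun w => FM m y w) :=
    fun m y => (hFjm m).comp (measurable_const.prodMk measurable_id)
  -- integrability over D m
  have intdF : ∀ m y, Integrable (fun w => dFM m y w) (D m) := by
    intro m y
    haveI := hD m
    refine Integrable.mono' (g := fun w => (1 + ‖dFM m y w‖ ^ 2) / 2)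
      (((integrable_const 1).add (hdFsq m y)).div_const 2)
      (mdF m y).aestronglyMeasurable ?_
    filter_upwards with w
    have h0 : (0:ℝ) ≤ ‖dFM m y w‖ := norm_nonneg _
    nlinarith [sq_nonneg (1 - ‖dFM m y w‖)]
  -- integrability over P
  have intPsq : ∀ m y, Integrable (fun ω => ‖dFM m y (z m ω)‖ ^ 2) P :=
    fun m y => integrable_comp_law (hz m) (hlaw m) (hdFsq m y)
  have intPvec : ∀ m y, Integrable (fun ω => dFM m y (z m ω)) P :=
    fun m y => integrable_comp_law (hz m) (hlaw m) (intdF m y)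
  have intPF : ∀ m y, Integrable (fun ω => FM m y (z m ω)) P :=
    fun m y => integrable_comp_law (hz m) (hlaw m) (hFint m y)
  -- Bregman representation
  have hBrep : ∀ m (u v : EuclideanSpace ℝ (Fin d)),
      fm m u - fm m v - ⟪dfm m v, u - v⟫_ℝ
        = ∫ w, (FM m u w - FM m v w - ⟪dFM m v w, u - v⟫_ℝ) ∂(D m) := by
    intro m u v
    have hi : ∫ w, ⟪dFM m v w, u - v⟫_ℝ ∂(D m) = ⟪dfm m v, u - v⟫_ℝ := by
      calc ∫ w, ⟪dFM m v w, u - v⟫_ℝ ∂(D m)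
          = ∫ w, ⟪u - v, dFM m v w⟫_ℝ ∂(D m) := by simp_rw [real_inner_comm]
        _ = ⟪u - v, ∫ w, dFM m v w ∂(D m)⟫_ℝ := integral_inner (intdF m v) (u - v)
        _ = ⟪dfm m v, u - v⟫_ℝ := by rw [← hdfm, real_inner_comm]
    have i1 : Integrable (fun w => FM m u w - FM m v w) (D m) := (hFint m u).sub (hFint m v)
    have i2 : Integrable (fun w => ⟪dFM m v w, u - v⟫_ℝ) (D m) := (intdF m v).inner_const _
    have h2 : ∫ w, (FM m u w - FM m v w - ⟪dFM m v w, u - v⟫_ℝ) ∂(D m)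
        = (∫ w, FM m u w ∂(D m)) - (∫ w, FM m v w ∂(D m))
          - ∫ w, ⟪dFM m v w, u - v⟫_ℝ ∂(D m) := by
      rw [integral_sub i1 i2, integral_sub (hFint m u) (hFint m v)]
    rw [hfm m u, hfm m v, ← hi, h2]
  have intBm : ∀ m (u v : EuclideanSpace ℝ (Fin d)),
      Integrable (fun w => FM m u w - FM m v w - ⟪dFM m v w, u - v⟫_ℝ) (D m) :=
    fun m u v => ((hFint m u).sub (hFint m v)).sub ((intdF m v).inner_const _)
  have hBle : ∀ m (u v : EuclideanSpace ℝ (Fin d)),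
      fm m u - fm m v - ⟪dfm m v, u - v⟫_ℝ ≤ L / 2 * ‖u - v‖ ^ 2 := by
    intro m u v
    haveI := hD m
    rw [hBrep m u v]
    calc ∫ w, (FM m u w - FM m v w - ⟪dFM m v w, u - v⟫_ℝ) ∂(D m)
        ≤ ∫ _, (L / 2 * ‖u - v‖ ^ 2) ∂(D m) := by
          refine integral_mono_ae (intBm m u v) (integrable_const _) ?_
          filter_upwards [hsmooth m] with w hw
          exact (hw u v).2
      _ = L / 2 * ‖u - v‖ ^ 2 := by simp
  -- Bregman averaging
  have hBregf : ∀ u v : EuclideanSpace ℝ (Fin d), Breg f df u v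
      = (M:ℝ)⁻¹ * ∑ m, (fm m u - fm m v - ⟪dfm m v, u - v⟫_ℝ) := by
    intro u v
    have hs : (M:ℝ)⁻¹ * ∑ m, (fm m u - fm m v - ⟪dfm m v, u - v⟫_ℝ)
        = (M:ℝ)⁻¹ * ((∑ m, fm m u) - (∑ m, fm m v) - ∑ m, ⟪dfm m v, u - v⟫_ℝ) := by
      rw [Finset.sum_sub_distrib, Finset.sum_sub_distrib]
    rw [hs, Breg, hfdef, hfdef, hdfdef, real_inner_smul_left, sum_inner]
    ring
  -- df xstar = 0
  have hfup : ∀ X, f X - f xstar - ⟪df xstar, X - xstar⟫_ℝ ≤ L / 2 * ‖X - xstar‖ ^ 2 := by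
    intro X
    have h1 : f X - f xstar - ⟪df xstar, X - xstar⟫_ℝ = Breg f df X xstar := rfl
    rw [h1, hBregf]
    have h2 : ∑ m, (fm m X - fm m xstar - ⟪dfm m xstar, X - xstar⟫_ℝ)
        ≤ (M:ℝ) * (L / 2 * ‖X - xstar‖ ^ 2) := by
      calc ∑ m, (fm m X - fm m xstar - ⟪dfm m xstar, X - xstar⟫_ℝ)
          ≤ ∑ _m : Fin M, L / 2 * ‖X - xstar‖ ^ 2 :=
            Finset.sum_le_sum (fun m _ => hBle m X xstar)
        _ = (M:ℝ) * (L / 2 * ‖X - xstar‖ ^ 2) := by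
            simp [Finset.sum_const, nsmul_eq_mul]
    calc (M:ℝ)⁻¹ * ∑ m, (fm m X - fm m xstar - ⟪dfm m xstar, X - xstar⟫_ℝ)
        ≤ (M:ℝ)⁻¹ * ((M:ℝ) * (L / 2 * ‖X - xstar‖ ^ 2)) :=
          mul_le_mul_of_nonneg_left h2 (by positivity)
      _ = L / 2 * ‖X - xstar‖ ^ 2 := by field_simp
  have hdf0 : df xstar = 0 := by
    set g0 := df xstar with hg0
    have h1 := hfup (xstar - L⁻¹ • g0)
    have h2 := hmin (xstar - L⁻¹ • g0)
    have e0 : xstar - L⁻¹ • g0 - xstar = -(L⁻¹ • g0) := by abel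
    rw [e0] at h1
    have e1 : ⟪g0, -(L⁻¹ • g0)⟫_ℝ = -(L⁻¹ * ‖g0‖ ^ 2) := by
      rw [inner_neg_right, real_inner_smul_right, real_inner_self_eq_norm_sq]
    have e2 : ‖-(L⁻¹ • g0)‖ ^ 2 = L⁻¹ ^ 2 * ‖g0‖ ^ 2 := by
      rw [norm_neg, norm_smul]
      simp [abs_of_pos (inv_pos.mpr hL), mul_pow]
    rw [e1, e2] at h1
    have e3 : L / 2 * (L⁻¹ ^ 2 * ‖g0‖ ^ 2) = 1 / 2 * (L⁻¹ * ‖g0‖ ^ 2) := by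
      field_simp
    rw [e3] at h1
    have h4 : L⁻¹ * ‖g0‖ ^ 2 ≤ 0 := by linarith
    have h5 : ‖g0‖ ^ 2 ≤ 0 := by
      by_contra hc
      push_neg at hc
      nlinarith [inv_pos.mpr hL]
    have h6 : ‖g0‖ ^ 2 = 0 := le_antisymm h5 (sq_nonneg _)
    exact norm_eq_zero.mp (pow_eq_zero_iff two_ne_zero |>.mp h6)
  have hsum0 : ∑ m, dfm m xstar = 0 := by
    have h1 := (hdfdef xstar).symm
    rw [hdf0] at h1
    rcases smul_eq_zero.mp h1 with h | h
    · exact absurd h (by simpa using hMne)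
    · exact h
  -- notation
  set b : Fin M → Ω → EuclideanSpace ℝ (Fin d) := fun m ω => dFM m xstar (z m ω) with hbdef
  -- coordinate integrability over P
  have hXi : ∀ (m : Fin M) (i : Fin d), Integrable (fun ω => b m ω i) P := by
    intro m i
    exact (EuclideanSpace.proj i : EuclideanSpace ℝ (Fin d) →L[ℝ] ℝ).integrable_comp
      (intPvec m xstar)
  have hcoordmeas : ∀ (m : Fin M) (i : Fin d),
      Measurable (fun w : Z => dFM m xstar w i) :=
    fun m i => (measurable_pi_apply i).comp ((WithLp.measurable_ofLp 2 _).comp (mdF m xstar))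
  have hcoordint : ∀ (m : Fin M) (i : Fin d), ∫ ω, b m ω i ∂P = dfm m xstar i := by
    intro m i
    have h1 : ∫ ω, b m ω i ∂P
        = (EuclideanSpace.proj i : EuclideanSpace ℝ (Fin d) →L[ℝ] ℝ) (∫ ω, b m ω ∂P) :=
      (EuclideanSpace.proj i : EuclideanSpace ℝ (Fin d) →L[ℝ] ℝ).integral_comp_comm
        (intPvec m xstar)
    rw [h1]
    have h2 : ∫ ω, b m ω ∂P = dfm m xstar := by
      rw [integral_comp_law (hz m) (hlaw m) (mdF m xstar).aestronglyMeasurable, ← hdfm]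
    rw [h2]
    rfl
  -- cross expectations via independence
  have hinner_cross : ∀ m n : Fin M, m ≠ n →
      ∫ ω, ⟪b m ω, b n ω⟫_ℝ ∂P = ⟪dfm m xstar, dfm n xstar⟫_ℝ := by
    intro m n hmn
    have hind : ∀ i : Fin d, IndepFun (fun ω => b m ω i) (fun ω => b n ω i) P :=
      fun i => (hindep.indepFun hmn).comp (hcoordmeas m i) (hcoordmeas n i)
    have hmuli : ∀ i : Fin d, Integrable (fun ω => b m ω i * b n ω i) P :=
      fun i => (hind i).integrable_mul (hXi m i) (hXi n i)
    calc ∫ ω, ⟪b m ω, b n ω⟫_ℝ ∂P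
        = ∫ ω, ∑ i, b m ω i * b n ω i ∂P := by
          refine integral_congr_ae (Filter.Eventually.of_forall fun ω => ?_)
          simp [PiLp.inner_apply, RCLike.inner_apply, conj_trivial]
          exact Finset.sum_congr rfl fun _ _ => mul_comm _ _
      _ = ∑ i, ∫ ω, b m ω i * b n ω i ∂P :=
          integral_finset_sum _ (fun i _ => hmuli i)
      _ = ∑ i, (∫ ω, b m ω i ∂P) * (∫ ω, b n ω i ∂P) := by
          refine Finset.sum_congr rfl fun i _ => ?_
          exact (hind i).integral_fun_mul_eq_mul_integral (hXi m i).aestronglyMeasurable (hXi n i).aestronglyMeasurable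
      _ = ∑ i, dfm m xstar i * dfm n xstar i := by
          refine Finset.sum_congr rfl fun i _ => ?_
          rw [hcoordint m i, hcoordint n i]
      _ = ⟪dfm m xstar, dfm n xstar⟫_ℝ := by
          simp [PiLp.inner_apply, RCLike.inner_apply, conj_trivial]
          exact Finset.sum_congr rfl fun _ _ => mul_comm _ _
  -- integrability of the inner products
  have hinnerint : ∀ m n : Fin M, Integrable (fun ω => ⟪b m ω, b n ω⟫_ℝ) P := by
    intro m n
    by_cases hmn : m = n
    · subst hmn
      have : (fun ω => ⟪b m ω, b m ω⟫_ℝ) = fun ω => ‖b m ω‖ ^ 2 := by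
        funext ω; rw [real_inner_self_eq_norm_sq]
      rw [this]
      exact intPsq m xstar
    · have hindn : IndepFun (fun ω => ‖b m ω‖) (fun ω => ‖b n ω‖) P :=
        (hindep.indepFun hmn).comp (mdF m xstar).norm (mdF n xstar).norm
      have hmul := hindn.integrable_mul (intPvec m xstar).norm (intPvec n xstar).norm
      refine Integrable.mono' hmul ?_ ?_
      · exact (((mdF m xstar).comp (hz m)).inner
          ((mdF n xstar).comp (hz n))).aestronglyMeasurable
      · filter_upwards with ω
        simpa using norm_inner_le_norm (𝕜 := ℝ) (b m ω) (b n ω)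
  -- the variance bound
  have hvar : ∫ ω, ‖∑ m, b m ω‖ ^ 2 ∂P ≤ ∑ m, ∫ w, ‖dFM m xstar w‖ ^ 2 ∂(D m) := by
    have hexp : ∀ ω, ‖∑ m, b m ω‖ ^ 2 = ∑ m, ∑ n, ⟪b m ω, b n ω⟫_ℝ := by
      intro ω
      rw [← real_inner_self_eq_norm_sq, sum_inner]
      exact Finset.sum_congr rfl fun m _ => inner_sum _ _ _
    have hPsq : ∀ m : Fin M, ∫ ω, ‖b m ω‖ ^ 2 ∂P = ∫ w, ‖dFM m xstar w‖ ^ 2 ∂(D m) :=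
      fun m => integral_comp_law (hz m) (hlaw m)
        ((mdF m xstar).norm.pow_const 2).aestronglyMeasurable
    have step1 : ∫ ω, ‖∑ m, b m ω‖ ^ 2 ∂P = ∑ m, ∑ n, ∫ ω, ⟪b m ω, b n ω⟫_ℝ ∂P := by
      calc ∫ ω, ‖∑ m, b m ω‖ ^ 2 ∂P = ∫ ω, ∑ m, ∑ n, ⟪b m ω, b n ω⟫_ℝ ∂P := by
            exact integral_congr_ae (Filter.Eventually.of_forall fun ω => hexp ω)
        _ = ∑ m, ∫ ω, ∑ n, ⟪b m ω, b n ω⟫_ℝ ∂P :=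
            integral_finset_sum _ (fun m _ => integrable_finset_sum _ (fun n _ => hinnerint m n))
        _ = ∑ m, ∑ n, ∫ ω, ⟪b m ω, b n ω⟫_ℝ ∂P :=
            Finset.sum_congr rfl fun m _ => integral_finset_sum _ (fun n _ => hinnerint m n)
    have hterm : ∀ m n : Fin M, ∫ ω, ⟪b m ω, b n ω⟫_ℝ ∂P
        = (if m = n then (∫ ω, ‖b m ω‖ ^ 2 ∂P) - ‖dfm m xstar‖ ^ 2 else 0)
          + ⟪dfm m xstar, dfm n xstar⟫_ℝ := by
      intro m n
      by_cases hmn : m = n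
      · subst hmn
        have hf : (fun ω => ⟪b m ω, b m ω⟫_ℝ) = fun ω => ‖b m ω‖ ^ 2 := by
          funext ω; rw [real_inner_self_eq_norm_sq]
        rw [if_pos rfl, hf, real_inner_self_eq_norm_sq]
        ring
      · rw [if_neg hmn, hinner_cross m n hmn, zero_add]
    have step2 : ∑ m, ∑ n, ∫ ω, ⟪b m ω, b n ω⟫_ℝ ∂P
        = (∑ m, ((∫ ω, ‖b m ω‖ ^ 2 ∂P) - ‖dfm m xstar‖ ^ 2)) + ‖∑ m, dfm m xstar‖ ^ 2 := by
      have e1 : ∀ m : Fin M,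
          ∑ n, ((if m = n then (∫ ω, ‖b m ω‖ ^ 2 ∂P) - ‖dfm m xstar‖ ^ 2 else 0)
            + ⟪dfm m xstar, dfm n xstar⟫_ℝ)
          = ((∫ ω, ‖b m ω‖ ^ 2 ∂P) - ‖dfm m xstar‖ ^ 2)
            + ⟪dfm m xstar, ∑ n, dfm n xstar⟫_ℝ := by
        intro m
        rw [Finset.sum_add_distrib, Finset.sum_ite_eq, inner_sum]
        simp
      simp_rw [hterm, e1]
      rw [Finset.sum_add_distrib, ← sum_inner, real_inner_self_eq_norm_sq]
    rw [step1, step2, hsum0]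
    simp only [norm_zero]
    have h0 : (0:ℝ) ^ 2 = 0 := by norm_num
    rw [h0, add_zero, Finset.sum_sub_distrib]
    have hnn : (0:ℝ) ≤ ∑ m, ‖dfm m xstar‖ ^ 2 :=
      Finset.sum_nonneg fun m _ => sq_nonneg _
    have : ∑ m, ∫ ω, ‖b m ω‖ ^ 2 ∂P = ∑ m, ∫ w, ‖dFM m xstar w‖ ^ 2 ∂(D m) :=
      Finset.sum_congr rfl fun m _ => hPsq m
    linarith [this]
  -- a.e. smoothness transferred to P
  have hsmoothP : ∀ᵐ ω ∂P, ∀ m, SmoothSC L 0 (fun X => FM m X (z m ω))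
      (fun X => dFM m X (z m ω)) := by
    rw [ae_all_iff]
    intro m
    exact ae_of_ae_map (hz m).aemeasurable ((hlaw m).symm ▸ hsmooth m)
  -- pointwise bound
  have hpt : ∀ᵐ ω ∂P, ‖(M:ℝ)⁻¹ • ∑ m, dFM m (x m) (z m ω)‖ ^ 2
      ≤ 2 * L ^ 2 * Vdev
        + 8 * L * ((M:ℝ)⁻¹ * ∑ m, (FM m xhat (z m ω) - FM m xstar (z m ω)
            - ⟪dFM m xstar (z m ω), xhat - xstar⟫_ℝ))
        + 4 * ‖(M:ℝ)⁻¹ • ∑ m, b m ω‖ ^ 2 := by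
    filter_upwards [hsmoothP] with ω hs
    have hsum : (M:ℝ)⁻¹ • ∑ m, dFM m (x m) (z m ω)
        = ((M:ℝ)⁻¹ • ∑ m, (dFM m (x m) (z m ω) - dFM m xhat (z m ω)))
          + ((M:ℝ)⁻¹ • ∑ m, (dFM m xhat (z m ω) - dFM m xstar (z m ω)))
          + ((M:ℝ)⁻¹ • ∑ m, b m ω) := by
      rw [← smul_add, ← smul_add, ← Finset.sum_add_distrib, ← Finset.sum_add_distrib]
      congr 1
      exact Finset.sum_congr rfl fun m _ => by simp [hbdef]
    calc ‖(M:ℝ)⁻¹ • ∑ m, dFM m (x m) (z m ω)‖ ^ 2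
        ≤ 2 * ‖(M:ℝ)⁻¹ • ∑ m, (dFM m (x m) (z m ω) - dFM m xhat (z m ω))‖ ^ 2
          + 4 * ‖(M:ℝ)⁻¹ • ∑ m, (dFM m xhat (z m ω) - dFM m xstar (z m ω))‖ ^ 2
          + 4 * ‖(M:ℝ)⁻¹ • ∑ m, b m ω‖ ^ 2 := by
          rw [hsum]; exact norm_add₃_sq_le _ _ _
      _ ≤ 2 * ((M:ℝ)⁻¹ * ∑ m, ‖dFM m (x m) (z m ω) - dFM m xhat (z m ω)‖ ^ 2)
          + 4 * ((M:ℝ)⁻¹ * ∑ m, ‖dFM m xhat (z m ω) - dFM m xstar (z m ω)‖ ^ 2)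
          + 4 * ‖(M:ℝ)⁻¹ • ∑ m, b m ω‖ ^ 2 := by
          have j1 := norm_avg_sq_le hMpos
            (fun m => dFM m (x m) (z m ω) - dFM m xhat (z m ω))
          have j2 := norm_avg_sq_le hMpos
            (fun m => dFM m xhat (z m ω) - dFM m xstar (z m ω))
          linarith
      _ ≤ 2 * ((M:ℝ)⁻¹ * ∑ m, L ^ 2 * ‖x m - xhat‖ ^ 2)
          + 4 * ((M:ℝ)⁻¹ * ∑ m, 2 * L * (FM m xhat (z m ω) - FM m xstar (z m ω)
              - ⟪dFM m xstar (z m ω), xhat - xstar⟫_ℝ))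
          + 4 * ‖(M:ℝ)⁻¹ • ∑ m, b m ω‖ ^ 2 := by
          have j1 : ∑ m, ‖dFM m (x m) (z m ω) - dFM m xhat (z m ω)‖ ^ 2
              ≤ ∑ m, L ^ 2 * ‖x m - xhat‖ ^ 2 :=
            Finset.sum_le_sum fun m _ => smoothsc_grad_sq hL (hs m) (x m) xhat
          have j2 : ∑ m, ‖dFM m xhat (z m ω) - dFM m xstar (z m ω)‖ ^ 2
              ≤ ∑ m, 2 * L * (FM m xhat (z m ω) - FM m xstar (z m ω)
                - ⟪dFM m xstar (z m ω), xhat - xstar⟫_ℝ) :=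
            Finset.sum_le_sum fun m _ => smoothsc_coco hL (hs m) xhat xstar
          have k1 := mul_le_mul_of_nonneg_left j1 (by positivity : (0:ℝ) ≤ (M:ℝ)⁻¹)
          have k2 := mul_le_mul_of_nonneg_left j2 (by positivity : (0:ℝ) ≤ (M:ℝ)⁻¹)
          linarith
      _ = 2 * L ^ 2 * Vdev
          + 8 * L * ((M:ℝ)⁻¹ * ∑ m, (FM m xhat (z m ω) - FM m xstar (z m ω)
              - ⟪dFM m xstar (z m ω), xhat - xstar⟫_ℝ))
          + 4 * ‖(M:ℝ)⁻¹ • ∑ m, b m ω‖ ^ 2 := by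
          rw [← Finset.mul_sum, ← Finset.mul_sum, hV]
          ring
  -- integrability of RHS
  have intS : ∀ m : Fin M, Integrable (fun ω => FM m xhat (z m ω) - FM m xstar (z m ω)
      - ⟪dFM m xstar (z m ω), xhat - xstar⟫_ℝ) P :=
    fun m => ((intPF m xhat).sub (intPF m xstar)).sub ((intPvec m xstar).inner_const _)
  have intAvgB : Integrable (fun ω => ‖(M:ℝ)⁻¹ • ∑ m, b m ω‖ ^ 2) P := by
    have hmeas : Measurable (fun ω => ∑ m, b m ω) :=
      Finset.measurable_sum _ (fun m _ => (mdF m xstar).comp (hz m))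
    refine Integrable.mono' (g := fun ω => (M:ℝ)⁻¹ * ∑ m, ‖b m ω‖ ^ 2)
      ((integrable_finset_sum _ (fun m _ => intPsq m xstar)).const_mul _)
      ((hmeas.const_smul ((M:ℝ)⁻¹)).norm.pow_const 2).aestronglyMeasurable ?_
    filter_upwards with ω
    rw [Real.norm_eq_abs, abs_of_nonneg (sq_nonneg _)]
    exact norm_avg_sq_le hMpos _
  have I2 : Integrable (fun ω => 8 * L * ((M:ℝ)⁻¹ * ∑ m, (FM m xhat (z m ω)
      - FM m xstar (z m ω) - ⟪dFM m xstar (z m ω), xhat - xstar⟫_ℝ))) P :=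
    ((integrable_finset_sum _ (fun m _ => intS m)).const_mul _).const_mul _
  have intRHS : Integrable (fun ω => 2 * L ^ 2 * Vdev
      + 8 * L * ((M:ℝ)⁻¹ * ∑ m, (FM m xhat (z m ω) - FM m xstar (z m ω)
          - ⟪dFM m xstar (z m ω), xhat - xstar⟫_ℝ))
      + 4 * ‖(M:ℝ)⁻¹ • ∑ m, b m ω‖ ^ 2) P :=
    ((integrable_const _).add I2).add (intAvgB.const_mul _)
  have hmain := integral_mono_of_nonneg
    (Filter.Eventually.of_forall fun ω => sq_nonneg _) intRHS hpt
  -- value of the RHS integral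
  have hSint : ∀ m : Fin M, ∫ ω, (FM m xhat (z m ω) - FM m xstar (z m ω)
      - ⟪dFM m xstar (z m ω), xhat - xstar⟫_ℝ) ∂P
      = fm m xhat - fm m xstar - ⟪dfm m xstar, xhat - xstar⟫_ℝ := by
    intro m
    rw [integral_comp_law (hz m) (hlaw m)
      (h := fun w => FM m xhat w - FM m xstar w - ⟪dFM m xstar w, xhat - xstar⟫_ℝ)
      ((((mF m xhat).sub (mF m xstar)).sub
        ((mdF m xstar).inner measurable_const)).aestronglyMeasurable),
      ← hBrep m xhat xstar]
  have hRHSval : ∫ ω, (2 * L ^ 2 * Vdev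
      + 8 * L * ((M:ℝ)⁻¹ * ∑ m, (FM m xhat (z m ω) - FM m xstar (z m ω)
          - ⟪dFM m xstar (z m ω), xhat - xstar⟫_ℝ))
      + 4 * ‖(M:ℝ)⁻¹ • ∑ m, b m ω‖ ^ 2) ∂P
      = 2 * L ^ 2 * Vdev + 8 * L * Breg f df xhat xstar
        + 4 * ∫ ω, ‖(M:ℝ)⁻¹ • ∑ m, b m ω‖ ^ 2 ∂P := by
    have IA : Integrable (fun ω => 2 * L ^ 2 * Vdev
        + 8 * L * ((M:ℝ)⁻¹ * ∑ m, (FM m xhat (z m ω) - FM m xstar (z m ω)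
            - ⟪dFM m xstar (z m ω), xhat - xstar⟫_ℝ))) P :=
      (integrable_const _).add I2
    have IB : Integrable (fun ω => 4 * ‖(M:ℝ)⁻¹ • ∑ m, b m ω‖ ^ 2) P :=
      intAvgB.const_mul _
    rw [integral_add IA IB, integral_add (integrable_const (2 * L ^ 2 * Vdev)) I2,
      integral_const, integral_const_mul, integral_const_mul, integral_const_mul,
      integral_finset_sum _ (fun m _ => intS m)]
    have hsums : ∑ m, ∫ ω, (FM m xhat (z m ω) - FM m xstar (z m ω)
        - ⟪dFM m xstar (z m ω), xhat - xstar⟫_ℝ) ∂P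
        = ∑ m, (fm m xhat - fm m xstar - ⟪dfm m xstar, xhat - xstar⟫_ℝ) :=
      Finset.sum_congr rfl fun m _ => hSint m
    rw [hsums, ← hBregf xhat xstar]
    simp [measure_univ]
  -- final variance piece
  have hlast : ∫ ω, ‖(M:ℝ)⁻¹ • ∑ m, b m ω‖ ^ 2 ∂P ≤ sdif2 / M := by
    have he : ∀ ω : Ω, ‖(M:ℝ)⁻¹ • ∑ m, b m ω‖ ^ 2 = ((M:ℝ)⁻¹) ^ 2 * ‖∑ m, b m ω‖ ^ 2 := by
      intro ω
      rw [norm_smul, Real.norm_eq_abs, abs_of_pos (inv_pos.mpr hMpos), mul_pow]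
    simp_rw [he]
    rw [integral_const_mul]
    have h2 : ∑ m, ∫ w, ‖dFM m xstar w‖ ^ 2 ∂(D m) = (M:ℝ) * sdif2 := by
      rw [hsdif2]
      field_simp
    calc ((M:ℝ)⁻¹) ^ 2 * ∫ ω, ‖∑ m, b m ω‖ ^ 2 ∂P
        ≤ ((M:ℝ)⁻¹) ^ 2 * ((M:ℝ) * sdif2) := by
          rw [← h2]
          exact mul_le_mul_of_nonneg_left hvar (by positivity)
      _ = sdif2 / M := by
          field_simp
  calc ∫ ω, ‖(M:ℝ)⁻¹ • ∑ m, dFM m (x m) (z m ω)‖ ^ 2 ∂P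
      ≤ ∫ ω, (2 * L ^ 2 * Vdev
        + 8 * L * ((M:ℝ)⁻¹ * ∑ m, (FM m xhat (z m ω) - FM m xstar (z m ω)
            - ⟪dFM m xstar (z m ω), xhat - xstar⟫_ℝ))
        + 4 * ‖(M:ℝ)⁻¹ • ∑ m, b m ω‖ ^ 2) ∂P := hmain
    _ = 2 * L ^ 2 * Vdev + 8 * L * Breg f df xhat xstar
        + 4 * ∫ ω, ‖(M:ℝ)⁻¹ • ∑ m, b m ω‖ ^ 2 ∂P := hRHSval
    _ ≤ 2 * L ^ 2 * Vdev + 8 * L * Breg f df xhat xstar + 4 * (sdif2 / M) := by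
        linarith [hlast]
    _ = 2 * L ^ 2 * Vdev + 8 * L * Breg f df xhat xstar + 4 * sdif2 / M := by ring
end

section
/- Let f_1, ..., f_M : ℝ^d → ℝ each be L-smooth and μ-strongly convex (μ ≥ 0), let f = (1/M) Σ_m f_m with minimizer x_*, let x^1, ..., x^M ∈ ℝ^d with average x̂ and V = (1/M) Σ_m ‖x^m - x̂‖². Then -(2/M) Σ_{m=1}^M ⟨x̂ - x_*, ∇f_m(x^m)⟩ ≤ -2(f(x̂) - f(x_*)) - μ‖x̂ - x_*‖² + L·V. -/
open MeasureTheory ProbabilityTheory Finset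
open scoped InnerProductSpace

/-- inner product bound, heterogeneous data (deterministic). -/
theorem inner_product_bound {d M : ℕ} (hM : 0 < M)
    (L μ : ℝ) (hL : 0 < L) (hμ : 0 ≤ μ)
    (fm : Fin M → EuclideanSpace ℝ (Fin d) → ℝ) (dfm : Fin M → EuclideanSpace ℝ (Fin d) → EuclideanSpace ℝ (Fin d))
    (hfm : ∀ m, SmoothSC L μ (fm m) (dfm m))
    (f : EuclideanSpace ℝ (Fin d) → ℝ) (hfdef : ∀ x, f x = (M : ℝ)⁻¹ * ∑ m, fm m x)
    (xstar : EuclideanSpace ℝ (Fin d)) (hmin : ∀ y, f xstar ≤ f y)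
    (x : Fin M → EuclideanSpace ℝ (Fin d))
    (xhat : EuclideanSpace ℝ (Fin d)) (hxhat : xhat = (M : ℝ)⁻¹ • ∑ m, x m)
    (Vdev : ℝ) (hV : Vdev = (M : ℝ)⁻¹ * ∑ m, ‖x m - xhat‖ ^ 2) :
    -(2 / M) * ∑ m, ⟪xhat - xstar, dfm m (x m)⟫_ℝ ≤
      -2 * (f xhat - f xstar) - μ * ‖xhat - xstar‖ ^ 2 + L * Vdev := by
  have hMR : (0:ℝ) < M := Nat.cast_pos.mpr hM
  have hMne : (M:ℝ) ≠ 0 := ne_of_gt hMR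
  have hsum0 : ∑ m, (x m - xhat) = (0 : EuclideanSpace ℝ (Fin d)) := by
    rw [Finset.sum_sub_distrib, Finset.sum_const, Finset.card_univ, Fintype.card_fin, hxhat,
      ← Nat.cast_smul_eq_nsmul ℝ, smul_smul, mul_inv_cancel₀ hMne, one_smul, sub_self]
  have h0 : ∑ m, ⟪x m - xhat, xhat - xstar⟫_ℝ = 0 := by
    rw [← sum_inner, hsum0, inner_zero_left]
  have hiden : ∑ m, ‖x m - xstar‖^2 = (∑ m, ‖x m - xhat‖^2) + M * ‖xhat - xstar‖^2 := by
    have he : ∀ m : Fin M, ‖x m - xstar‖^2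
        = ‖x m - xhat‖^2 + 2*⟪x m - xhat, xhat - xstar⟫_ℝ + ‖xhat - xstar‖^2 := by
      intro m
      have h : x m - xstar = (x m - xhat) + (xhat - xstar) := by abel
      rw [h, norm_add_sq_real]
    simp_rw [he]
    rw [Finset.sum_add_distrib, Finset.sum_add_distrib, ← Finset.mul_sum, h0, Finset.sum_const,
      Finset.card_univ, Fintype.card_fin, nsmul_eq_mul]
    ring
  have key : ∀ m : Fin M, ⟪dfm m (x m), xstar - xhat⟫_ℝ ≤
      (fm m xstar - fm m xhat) - μ/2 * ‖xstar - x m‖^2 + L/2 * ‖xhat - x m‖^2 := by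
    intro m
    have h1 := (hfm m xstar (x m)).1
    have h2 := (hfm m xhat (x m)).2
    have e : ⟪dfm m (x m), xstar - xhat⟫_ℝ
        = ⟪dfm m (x m), xstar - x m⟫_ℝ - ⟪dfm m (x m), xhat - x m⟫_ℝ := by
      rw [← inner_sub_right]; congr 1; abel
    rw [e]; linarith
  have hnorm1 : ∀ m : Fin M, ‖xstar - x m‖ = ‖x m - xstar‖ := fun m => norm_sub_rev _ _
  have hnorm2 : ∀ m : Fin M, ‖xhat - x m‖ = ‖x m - xhat‖ := fun m => norm_sub_rev _ _
  have hsumkey : ∑ m, ⟪dfm m (x m), xstar - xhat⟫_ℝ ≤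
      (∑ m, fm m xstar) - (∑ m, fm m xhat) - μ/2 * ∑ m, ‖x m - xstar‖^2
        + L/2 * ∑ m, ‖x m - xhat‖^2 := by
    calc ∑ m, ⟪dfm m (x m), xstar - xhat⟫_ℝ
        ≤ ∑ m, ((fm m xstar - fm m xhat) - μ/2 * ‖xstar - x m‖^2 + L/2 * ‖xhat - x m‖^2) :=
          Finset.sum_le_sum fun m _ => key m
      _ = (∑ m, fm m xstar) - (∑ m, fm m xhat) - μ/2 * ∑ m, ‖x m - xstar‖^2
            + L/2 * ∑ m, ‖x m - xhat‖^2 := by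
          simp_rw [hnorm1, hnorm2]
          rw [Finset.sum_add_distrib, Finset.sum_sub_distrib, Finset.sum_sub_distrib,
            ← Finset.mul_sum, ← Finset.mul_sum]
  have hflip : ∀ m : Fin M, ⟪xhat - xstar, dfm m (x m)⟫_ℝ = -⟪dfm m (x m), xstar - xhat⟫_ℝ := by
    intro m
    rw [real_inner_comm, ← inner_neg_right]
    congr 1; abel
  simp_rw [hflip]
  rw [Finset.sum_neg_distrib, hfdef, hfdef, hV]
  have hSpos : (0:ℝ) ≤ ∑ m, ‖x m - xhat‖^2 :=
    Finset.sum_nonneg fun m _ => sq_nonneg _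
  have hc : (M:ℝ)⁻¹ * M = 1 := inv_mul_cancel₀ hMne
  have hcpos : (0:ℝ) < (M:ℝ)⁻¹ := inv_pos.mpr hMR
  rw [div_eq_mul_inv]
  set c : ℝ := (M:ℝ)⁻¹ with hcdef
  set T : ℝ := ∑ m, ⟪dfm m (x m), xstar - xhat⟫_ℝ with hT
  set A : ℝ := ∑ m, fm m xstar with hA
  set B : ℝ := ∑ m, fm m xhat with hB
  set S : ℝ := ∑ m, ‖x m - xhat‖^2 with hS
  set G : ℝ := ‖xhat - xstar‖^2 with hG
  have h1 : T ≤ A - B - μ/2*S - μ/2*((M:ℝ)*G) + L/2*S := by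
    rw [hiden] at hsumkey; linarith
  have h3 : c*T ≤ c*A - c*B - μ/2*(c*S) - μ/2*G + L/2*(c*S) := by
    have h2 := mul_le_mul_of_nonneg_left h1 hcpos.le
    have e : c*(A - B - μ/2*S - μ/2*((M:ℝ)*G) + L/2*S)
        = c*A - c*B - μ/2*(c*S) - μ/2*((c*(M:ℝ))*G) + L/2*(c*S) := by ring
    rw [e, hc, one_mul] at h2
    exact h2
  have h4 : 0 ≤ μ*(c*S) := mul_nonneg hμ (mul_nonneg hcpos.le hSpos)
  linarith
end
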